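/- arXiv:2211.07196 — 3 statements merged into one kernel-verified Lean document; each statement's English description precedes it below -/
import Mathlib

section
/- Let n ≥ 2 be an integer, let a < b be real numbers, let f ∈ 𝒟ⁿ([a,b]), and let c ∈ [a,b]. Define g : [a,b] → ℝ by g(x) = (f(x) − f(c))/(x − c) for x ≠ c and g(c) = f′(c). Then g ∈ 𝒟^{n−1}([a,b]), and for every x ∈ (a,b) there exists ξ ∈ (a,b) such that g^{(n−1)}(x) = f^{(n)}(ξ)/n. -/
open Set Polynomial Nat MeasureTheory ENNReal Filter Topology

/-- `fd 0` belongs to `𝒟ⁿ([a,b])`, with `fd k` its `k`-th derivative: `fd k` exists and is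
continuous on `[a,b]` for `0 ≤ k ≤ n-1`, and `fd n` is the derivative of `fd (n-1)` on `(a,b)`. -/
def IsDn (n : ℕ) (a b : ℝ) (fd : ℕ → ℝ → ℝ) : Prop :=
  (∀ k, k + 1 < n → ∀ x ∈ Set.Icc a b, HasDerivWithinAt (fd k) (fd (k + 1) x) (Set.Icc a b) x) ∧
  ContinuousOn (fd (n - 1)) (Set.Icc a b) ∧
  (∀ x ∈ Set.Ioo a b, HasDerivAt (fd (n - 1)) (fd n x) x)

/-- `m_n(f) = inf_{a<t<b} |f^{(n)}(t)|`. -/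
noncomputable def mIoo (n : ℕ) (a b : ℝ) (fd : ℕ → ℝ → ℝ) : ℝ :=
  sInf ((fun t => |fd n t|) '' Set.Ioo a b)

/-- `‖f‖_{p,[a,b]}` for `0 < p < ∞`. -/
noncomputable def Lp (p a b : ℝ) (f : ℝ → ℝ) : ℝ :=
  (∫ t in a..b, |f t| ^ p) ^ (1 / p)

/-- `‖f‖_{∞,[a,b]}`. -/
noncomputable def Lsup (a b : ℝ) (f : ℝ → ℝ) : ℝ :=
  sSup ((fun t => |f t|) '' Set.Icc a b)

/-- `‖f‖_{p,[a,b]}` for `0 < p ≤ ∞`. -/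
noncomputable def pnorm (p : ℝ≥0∞) (a b : ℝ) (f : ℝ → ℝ) : ℝ :=
  if p = ⊤ then Lsup a b f else Lp p.toReal a b f

/-- `D**(n,p,[a,b])`, `p` finite. -/
noncomputable def Dstar (n : ℕ) (p a b : ℝ) : ℝ :=
  sInf { c | ∃ Q : Polynomial ℝ, Q.Monic ∧ Q.natDegree = n ∧ c = Lp p a b (fun x => Q.eval x) }

/-- `D**(n,∞,[a,b])`. -/
noncomputable def DstarInf (n : ℕ) (a b : ℝ) : ℝ :=
  sInf { c | ∃ Q : Polynomial ℝ, Q.Monic ∧ Q.natDegree = n ∧ c = Lsup a b (fun x => Q.eval x) }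

/-- `C(n,p)`, `p` finite. -/
noncomputable def Cnp (n : ℕ) (p : ℝ) : ℝ :=
  sSup { c | ∃ fd : ℕ → ℝ → ℝ, IsDn n 0 1 fd ∧ (∃ x ∈ Set.Icc (0:ℝ) 1, fd 0 x ≠ 0) ∧
    c = mIoo n 0 1 fd / Lp p 0 1 (fd 0) }

/-- `C(n,∞)`. -/
noncomputable def CnpInf (n : ℕ) : ℝ :=
  sSup { c | ∃ fd : ℕ → ℝ → ℝ, IsDn n 0 1 fd ∧ (∃ x ∈ Set.Icc (0:ℝ) 1, fd 0 x ≠ 0) ∧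
    c = mIoo n 0 1 fd / Lsup 0 1 (fd 0) }

noncomputable def gdI (fd : ℕ → ℝ → ℝ) (c : ℝ) (k : ℕ) (x : ℝ) : ℝ :=
  ∫ t in (0:ℝ)..1, t ^ k * fd (k+1) (c + t * (x - c))

section Aux
variable {n : ℕ} {a b : ℝ} {fd : ℕ → ℝ → ℝ} {c : ℝ}

lemma seg_mem (hc : c ∈ Set.Icc a b) {x t : ℝ} (hx : x ∈ Set.Icc a b)
    (ht : t ∈ Set.Icc (0:ℝ) 1) : c + t * (x - c) ∈ Set.Icc a b := by
  obtain ⟨h1, h2⟩ := hc; obtain ⟨h3, h4⟩ := hx; obtain ⟨h5, h6⟩ := ht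
  constructor <;> nlinarith

lemma cont_fd (hf : IsDn n a b fd) {m : ℕ} (hm : m ≤ n - 1) :
    ContinuousOn (fd m) (Set.Icc a b) := by
  rcases eq_or_lt_of_le hm with h | h
  · rw [h]; exact hf.2.1
  · exact fun x hx => (hf.1 m (by omega) x hx).continuousWithinAt

lemma fd_hasDerivAt (hf : IsDn n a b fd) (hn : 1 ≤ n) {j : ℕ} (hj : j ≤ n - 1) {x : ℝ}
    (hx : x ∈ Set.Ioo a b) : HasDerivAt (fd j) (fd (j+1) x) x := by
  rcases eq_or_lt_of_le hj with h | h
  · have h1 : j + 1 = n := by omega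
    rw [h1, h]; exact hf.2.2 x hx
  · exact (hf.1 j (by omega) x (Ioo_subset_Icc_self hx)).hasDerivAt
      (Icc_mem_nhds hx.1 hx.2)

lemma sum_hasDerivAt (hf : IsDn n a b fd) (hn : 1 ≤ n) (c : ℝ) {k : ℕ} (hk : k ≤ n - 1)
    {s : ℝ} (hs : s ∈ Set.Ioo a b) :
    HasDerivAt (fun y => ∑ j ∈ Finset.range (k+1), fd j y * (c - y) ^ j / (j.factorial : ℝ))
      (fd (k+1) s * (c - s) ^ k / (k.factorial : ℝ)) s := by
  induction k with
  | zero => simpa using fd_hasDerivAt hf hn (by omega) hs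
  | succ k ih =>
    have ihk := ih (by omega)
    have h1 : HasDerivAt (fun y => (c - y) ^ (k+1)) (-((k+1) * (c - s) ^ k)) s := by
      have := ((hasDerivAt_id s).const_sub c).pow (k+1)
      refine this.congr_deriv ?_
      simp only [id_eq]
      push_cast
      ring
    have h2 := fd_hasDerivAt hf hn (show k + 1 ≤ n - 1 from hk) hs
    have h3 := (h2.mul h1).div_const ((k+1).factorial : ℝ)
    have h4 := ihk.add h3
    have he : (fun y => ∑ j ∈ Finset.range (k+1+1), fd j y * (c - y) ^ j / (j.factorial : ℝ))
        = fun y => (∑ j ∈ Finset.range (k+1), fd j y * (c - y) ^ j / (j.factorial : ℝ))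
          + fd (k+1) y * (c - y) ^ (k+1) / ((k+1).factorial : ℝ) := by
      funext y; rw [Finset.sum_range_succ]
    rw [he]
    refine h4.congr_deriv ?_
    have hkf : ((k+1).factorial : ℝ) = (k+1) * (k.factorial : ℝ) := by
      rw [Nat.factorial_succ]; push_cast; ring
    have hk0 : (k.factorial : ℝ) ≠ 0 := Nat.cast_ne_zero.2 k.factorial_ne_zero
    rw [hkf]
    field_simp
    ring

lemma fd_mvt (hf : IsDn n a b fd) (hn : 1 ≤ n) {m : ℕ} (hm : m + 1 ≤ n - 1)
    {y₀ y : ℝ} (h0 : y₀ ∈ Set.Icc a b) (h1 : y ∈ Set.Icc a b) :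
    ∃ ζ ∈ Set.Icc a b, |ζ - y₀| ≤ |y - y₀| ∧ fd m y - fd m y₀ = fd (m+1) ζ * (y - y₀) := by
  rcases lt_trichotomy y₀ y with h | h | h
  · obtain ⟨ζ, hζ, e⟩ := exists_hasDerivAt_eq_slope (fd m) (fd (m+1)) h
      ((cont_fd hf (by omega)).mono (Icc_subset_Icc h0.1 h1.2))
      (fun z hz => fd_hasDerivAt hf hn (by omega)
        ⟨lt_of_le_of_lt h0.1 hz.1, lt_of_lt_of_le hz.2 h1.2⟩)
    refine ⟨ζ, ⟨le_trans h0.1 hζ.1.le, le_trans hζ.2.le h1.2⟩, ?_, ?_⟩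
    · rw [abs_of_pos (sub_pos.2 hζ.1), abs_of_pos (sub_pos.2 h)]
      linarith [hζ.2]
    · rw [e, div_mul_cancel₀ _ (sub_ne_zero.2 (ne_of_gt h))]
  · exact ⟨y₀, h0, by simp [h], by simp [h]⟩
  · obtain ⟨ζ, hζ, e⟩ := exists_hasDerivAt_eq_slope (fd m) (fd (m+1)) h
      ((cont_fd hf (by omega)).mono (Icc_subset_Icc h1.1 h0.2))
      (fun z hz => fd_hasDerivAt hf hn (by omega)
        ⟨lt_of_le_of_lt h1.1 hz.1, lt_of_lt_of_le hz.2 h0.2⟩)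
    refine ⟨ζ, ⟨le_trans h1.1 hζ.1.le, le_trans hζ.2.le h0.2⟩, ?_, ?_⟩
    · rw [abs_of_neg (sub_neg.2 hζ.2), abs_of_neg (sub_neg.2 h)]
      linarith [hζ.1]
    · rw [e]
      have hne : y₀ - y ≠ 0 := sub_ne_zero.2 (ne_of_gt h)
      field_simp
      ring
  
lemma integrand_cont {g : ℝ → ℝ} (hg : ContinuousOn g (Set.Icc a b)) (hc : c ∈ Set.Icc a b)
    {x : ℝ} (hx : x ∈ Set.Icc a b) (k : ℕ) :
    IntervalIntegrable (fun t => t ^ k * g (c + t * (x - c))) volume 0 1 := by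
  apply ContinuousOn.intervalIntegrable
  rw [uIcc_of_le zero_le_one]
  refine ContinuousOn.mul (continuous_pow k).continuousOn ?_
  exact hg.comp (Continuous.continuousOn (by continuity)) (fun t ht => seg_mem hc hx ht)

lemma gdI_self (fd : ℕ → ℝ → ℝ) (c : ℝ) (k : ℕ) :
    gdI fd c k c = fd (k+1) c / (k+1) := by
  unfold gdI
  simp only [sub_self, mul_zero, add_zero]
  rw [intervalIntegral.integral_mul_const, integral_pow]
  simp
  ring

lemma gdI_eq (hf : IsDn n a b fd) (hn : 2 ≤ n) (hc : c ∈ Set.Icc a b) {k : ℕ}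
    (hk : k + 1 ≤ n - 1) {x : ℝ} (hx : x ∈ Set.Icc a b) (hxc : x ≠ c) :
    gdI fd c k x = (fd 0 c - ∑ j ∈ Finset.range (k+1), fd j x * (c - x) ^ j / (j.factorial : ℝ))
      * (k.factorial : ℝ) / (c - x) ^ (k+1) := by
  have hcx : c - x ≠ 0 := sub_ne_zero.2 (Ne.symm hxc)
  have hk1 : k ≤ n - 1 := by omega
  have hΨd : ∀ t ∈ Set.Ioo (0:ℝ) 1, HasDerivAt
      (fun t => ∑ j ∈ Finset.range (k+1),
        fd j (c + t*(x-c)) * (c - (c + t*(x-c)))^j / (j.factorial:ℝ))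
      ((t^k * fd (k+1) (c + t*(x-c))) * ((c-x)^k * (x-c)) / (k.factorial:ℝ)) t := by
    intro t ht
    have hyt : c + t*(x-c) ∈ Set.Ioo a b := by
      rcases lt_or_gt_of_ne (Ne.symm hxc) with h | h
      · constructor <;> nlinarith [hc.1, hc.2, hx.1, hx.2, ht.1, ht.2]
      · constructor <;> nlinarith [hc.1, hc.2, hx.1, hx.2, ht.1, ht.2]
    have hS := sum_hasDerivAt hf (by omega) c hk1 hyt
    have haff : HasDerivAt (fun t : ℝ => c + t * (x - c)) (x - c) t := by
      simpa using ((hasDerivAt_id t).mul_const (x - c)).const_add c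
    have hcomp := hS.comp t haff
    refine hcomp.congr_deriv ?_
    rw [show c - (c + t*(x-c)) = t * (c-x) by ring, mul_pow]
    ring
  have hcont : ContinuousOn (fun t => ∑ j ∈ Finset.range (k+1),
      fd j (c + t*(x-c)) * (c - (c + t*(x-c)))^j / (j.factorial:ℝ)) (Set.Icc 0 1) := by
    apply continuousOn_finset_sum
    intro j hj
    have hfj : ContinuousOn (fd j) (Set.Icc a b) :=
      cont_fd hf (by simp only [Finset.mem_range] at hj; omega)
    have h1 : ContinuousOn (fun t : ℝ => fd j (c + t*(x-c))) (Set.Icc 0 1) :=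
      hfj.comp (Continuous.continuousOn (by continuity)) (fun t ht => seg_mem hc hx ht)
    exact (h1.mul (Continuous.continuousOn (by continuity))).div_const _
  have hint : IntervalIntegrable
      (fun t => (t^k * fd (k+1) (c + t*(x-c))) * ((c-x)^k * (x-c)) / (k.factorial:ℝ))
      volume 0 1 :=
    ((integrand_cont (cont_fd hf hk) hc hx k).mul_const _).div_const _
  have hFTC := intervalIntegral.integral_eq_sub_of_hasDeriv_right_of_le zero_le_one hcont
      (fun t ht => (hΨd t ht).hasDerivWithinAt) hint
  rw [intervalIntegral.integral_div, intervalIntegral.integral_mul_const] at hFTC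
  have e1 : (∑ j ∈ Finset.range (k+1),
      fd j (c + 1*(x-c)) * (c - (c + 1*(x-c)))^j / (j.factorial:ℝ))
      = ∑ j ∈ Finset.range (k+1), fd j x * (c - x)^j / (j.factorial:ℝ) := by
    norm_num
  have e0 : (∑ j ∈ Finset.range (k+1),
      fd j (c + 0*(x-c)) * (c - (c + 0*(x-c)))^j / (j.factorial:ℝ)) = fd 0 c := by
    rw [Finset.sum_eq_single_of_mem 0 (Finset.mem_range.2 (Nat.succ_pos k))]
    · norm_num
    · intro j _ hj
      simp [zero_pow hj]
  rw [e1, e0] at hFTC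
  have hkf : (k.factorial:ℝ) ≠ 0 := Nat.cast_ne_zero.2 k.factorial_ne_zero
  rw [eq_div_iff (pow_ne_zero _ hcx)]
  field_simp at hFTC
  have hgd : (∫ (t : ℝ) in (0:ℝ)..1, t ^ k * fd (k+1) (c + t * (x - c))) = gdI fd c k x := rfl
  rw [hgd] at hFTC
  linear_combination -hFTC

lemma lagrange_rem (hf : IsDn n a b fd) (hn : 2 ≤ n) (hc : c ∈ Set.Icc a b) {x : ℝ}
    (hx : x ∈ Set.Icc a b) (hxc : x ≠ c) :
    ∃ ξ ∈ Set.Ioo a b, fd 0 c - ∑ j ∈ Finset.range n, fd j x * (c - x) ^ j / (j.factorial : ℝ)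
      = fd n ξ * (c - x) ^ n / (n.factorial : ℝ) := by
  have hn1 : n - 1 + 1 = n := by omega
  set S : ℝ → ℝ := fun y => ∑ j ∈ Finset.range n, fd j y * (c - y) ^ j / (j.factorial : ℝ)
    with hS
  have hSd : ∀ s ∈ Set.Ioo a b,
      HasDerivAt S (fd n s * (c - s) ^ (n-1) / ((n-1).factorial : ℝ)) s := by
    intro s hs
    have := sum_hasDerivAt hf (by omega) c (k := n - 1) (le_refl _) hs
    rw [hn1] at this
    exact this
  have hScont : ContinuousOn S (Set.Icc a b) := by
    apply continuousOn_finset_sum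
    intro j hj
    have hfj : ContinuousOn (fd j) (Set.Icc a b) :=
      cont_fd hf (by simp only [Finset.mem_range] at hj; omega)
    exact (hfj.mul (Continuous.continuousOn (by continuity))).div_const _
  have hgd : ∀ s : ℝ, HasDerivAt (fun y => (c - y) ^ n) (-((n:ℝ) * (c - s) ^ (n-1))) s := by
    intro s
    have := ((hasDerivAt_id s).const_sub c).pow n
    refine this.congr_deriv ?_
    simp only [id_eq]
    rw [show n - 1 = n - 1 from rfl]
    push_cast
    ring
  have hSc : S c = fd 0 c := by
    show (∑ j ∈ Finset.range n, fd j c * (c - c) ^ j / (j.factorial : ℝ)) = fd 0 c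
    rw [Finset.sum_eq_single_of_mem 0 (Finset.mem_range.2 (by omega : 0 < n))]
    · norm_num
    · intro j _ hj
      simp [zero_pow hj]
  have hfact : ((n:ℝ)) * ((n-1).factorial : ℝ) = (n.factorial : ℝ) := by
    rw [← Nat.cast_mul, Nat.mul_factorial_pred (by omega)]
  have hnf : ((n-1).factorial : ℝ) ≠ 0 := Nat.cast_ne_zero.2 (n-1).factorial_ne_zero
  rcases lt_or_gt_of_ne hxc with h | h
  · -- x < c
    obtain ⟨ξ, hξ, E⟩ := exists_ratio_hasDerivAt_eq_ratio_slope S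
      (fun s => fd n s * (c - s) ^ (n-1) / ((n-1).factorial : ℝ)) h
      (hScont.mono (Icc_subset_Icc hx.1 hc.2))
      (fun s hs => hSd s ⟨lt_of_le_of_lt hx.1 hs.1, lt_of_lt_of_le hs.2 hc.2⟩)
      (fun y => (c - y) ^ n) (fun s => -((n:ℝ) * (c - s) ^ (n-1)))
      ((continuous_const.sub continuous_id).pow n).continuousOn
      (fun s _ => hgd s)
    have hξI : ξ ∈ Set.Ioo a b := ⟨lt_of_le_of_lt hx.1 hξ.1, lt_of_lt_of_le hξ.2 hc.2⟩
    refine ⟨ξ, hξI, ?_⟩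
    have hcξ : (c - ξ) ^ (n-1) ≠ 0 := pow_ne_zero _ (sub_ne_zero.2 (ne_of_gt hξ.2))
    rw [hSc, sub_self, zero_pow (by omega)] at E
    have hSx : (∑ j ∈ Finset.range n, fd j x * (c - x) ^ j / (j.factorial : ℝ)) = S x := rfl
    rw [hSx, eq_div_iff (Nat.cast_ne_zero.2 n.factorial_ne_zero : (n.factorial : ℝ) ≠ 0)]
    field_simp at E
    apply mul_left_cancel₀ hcξ
    linear_combination (c - ξ)^(n-1) * E - (c - ξ)^(n-1) * (fd 0 c - S x) * hfact
  · -- c < x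
    obtain ⟨ξ, hξ, E⟩ := exists_ratio_hasDerivAt_eq_ratio_slope S
      (fun s => fd n s * (c - s) ^ (n-1) / ((n-1).factorial : ℝ)) h
      (hScont.mono (Icc_subset_Icc hc.1 hx.2))
      (fun s hs => hSd s ⟨lt_of_le_of_lt hc.1 hs.1, lt_of_lt_of_le hs.2 hx.2⟩)
      (fun y => (c - y) ^ n) (fun s => -((n:ℝ) * (c - s) ^ (n-1)))
      ((continuous_const.sub continuous_id).pow n).continuousOn
      (fun s _ => hgd s)
    have hξI : ξ ∈ Set.Ioo a b := ⟨lt_of_le_of_lt hc.1 hξ.1, lt_of_lt_of_le hξ.2 hx.2⟩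
    refine ⟨ξ, hξI, ?_⟩
    have hcξ : (c - ξ) ^ (n-1) ≠ 0 := pow_ne_zero _ (sub_ne_zero.2 (ne_of_lt hξ.1))
    rw [hSc, sub_self, zero_pow (by omega)] at E
    have hSx : (∑ j ∈ Finset.range n, fd j x * (c - x) ^ j / (j.factorial : ℝ)) = S x := rfl
    rw [hSx, eq_div_iff (Nat.cast_ne_zero.2 n.factorial_ne_zero : (n.factorial : ℝ) ≠ 0)]
    field_simp at E
    apply mul_left_cancel₀ hcξ
    linear_combination -(c - ξ)^(n-1) * E - (c - ξ)^(n-1) * (fd 0 c - S x) * hfact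

lemma gdI_hasDerivWithin (hf : IsDn n a b fd) (hn : 2 ≤ n) (hc : c ∈ Set.Icc a b) {k : ℕ}
    (hk : k + 2 ≤ n - 1) {x₀ : ℝ} (hx₀ : x₀ ∈ Set.Icc a b) :
    HasDerivWithinAt (gdI fd c k) (gdI fd c (k+1) x₀) (Set.Icc a b) x₀ := by
  rw [hasDerivWithinAt_iff_isLittleO, Asymptotics.isLittleO_iff]
  intro ε hε
  have hcont2 : ContinuousOn (fd (k+2)) (Set.Icc a b) := cont_fd hf (by omega)
  have huc := isCompact_Icc.uniformContinuousOn_of_continuous hcont2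
  rw [Metric.uniformContinuousOn_iff] at huc
  obtain ⟨δ, hδ, hδ'⟩ := huc ε hε
  have hmem : Metric.ball x₀ δ ∩ Set.Icc a b ∈ 𝓝[Set.Icc a b] x₀ :=
    inter_mem (nhdsWithin_le_nhds (Metric.ball_mem_nhds _ hδ)) self_mem_nhdsWithin
  filter_upwards [hmem] with x hx
  obtain ⟨hball, hxI⟩ := hx
  have hIA : IntervalIntegrable (fun t => t^k * fd (k+1) (c + t*(x - c))) volume 0 1 :=
    integrand_cont (cont_fd hf (by omega)) hc hxI k
  have hIB : IntervalIntegrable (fun t => t^k * fd (k+1) (c + t*(x₀ - c))) volume 0 1 :=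
    integrand_cont (cont_fd hf (by omega)) hc hx₀ k
  have hIC : IntervalIntegrable
      (fun t => (x - x₀) * (t^(k+1) * fd (k+2) (c + t*(x₀ - c)))) volume 0 1 :=
    (integrand_cont (cont_fd hf (by omega)) hc hx₀ (k+1)).const_mul (x - x₀)
  have key : gdI fd c k x - gdI fd c k x₀ - (x - x₀) • gdI fd c (k+1) x₀
      = ∫ t in (0:ℝ)..1, (t^k * fd (k+1) (c + t*(x - c)) - t^k * fd (k+1) (c + t*(x₀ - c))
          - (x - x₀) * (t^(k+1) * fd (k+2) (c + t*(x₀ - c)))) := by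
    rw [intervalIntegral.integral_sub (hIA.sub hIB) hIC, intervalIntegral.integral_sub hIA hIB]
    show gdI fd c k x - gdI fd c k x₀ - (x - x₀) * gdI fd c (k+1) x₀ = _
    rw [show (x - x₀) * gdI fd c (k+1) x₀
      = ∫ t in (0:ℝ)..1, (x - x₀) * (t^(k+1) * fd (k+2) (c + t*(x₀ - c)))
      from (intervalIntegral.integral_const_mul _ _).symm]
    rfl
  rw [key]
  have hbd : ∀ t ∈ Set.uIoc (0:ℝ) 1,
      ‖t^k * fd (k+1) (c + t*(x - c)) - t^k * fd (k+1) (c + t*(x₀ - c))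
        - (x - x₀) * (t^(k+1) * fd (k+2) (c + t*(x₀ - c)))‖ ≤ ε * ‖x - x₀‖ := by
    intro t ht
    rw [Set.uIoc_of_le zero_le_one] at ht
    have htI : t ∈ Set.Icc (0:ℝ) 1 := ⟨le_of_lt ht.1, ht.2⟩
    have hy : c + t*(x - c) ∈ Set.Icc a b := seg_mem hc hxI htI
    have hy₀ : c + t*(x₀ - c) ∈ Set.Icc a b := seg_mem hc hx₀ htI
    obtain ⟨ζ, hζI, hζd, hζe⟩ := fd_mvt hf (by omega) (m := k+1) (by omega) hy₀ hy
    have hyy₀ : c + t*(x - c) - (c + t*(x₀ - c)) = t * (x - x₀) := by ring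
    have hζδ : dist ζ (c + t*(x₀ - c)) < δ := by
      rw [Real.dist_eq]
      calc |ζ - (c + t*(x₀ - c))| ≤ |c + t*(x - c) - (c + t*(x₀ - c))| := hζd
        _ = t * |x - x₀| := by rw [hyy₀, abs_mul, abs_of_pos ht.1]
        _ ≤ 1 * |x - x₀| := by
            apply mul_le_mul_of_nonneg_right ht.2 (abs_nonneg _)
        _ < δ := by rw [one_mul, ← Real.dist_eq]; exact Metric.mem_ball.1 hball
    have hbb := hδ' ζ hζI (c + t*(x₀ - c)) hy₀ hζδ
    rw [Real.dist_eq] at hbb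
    have heq : t^k * fd (k+1) (c + t*(x - c)) - t^k * fd (k+1) (c + t*(x₀ - c))
        - (x - x₀) * (t^(k+1) * fd (k+2) (c + t*(x₀ - c)))
        = t^(k+1) * (x - x₀) * (fd (k+2) ζ - fd (k+2) (c + t*(x₀ - c))) := by
      rw [hyy₀] at hζe
      linear_combination t^k * hζe
    rw [heq]
    rw [Real.norm_eq_abs, abs_mul, abs_mul]
    have h1 : |t^(k+1)| ≤ 1 := by
      rw [abs_of_nonneg (pow_nonneg (le_of_lt ht.1) _)]
      exact pow_le_one₀ (le_of_lt ht.1) ht.2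
    have h2 : |fd (k+2) ζ - fd (k+2) (c + t*(x₀ - c))| ≤ ε := le_of_lt hbb
    calc |t^(k+1)| * |x - x₀| * |fd (k+2) ζ - fd (k+2) (c + t*(x₀ - c))|
        ≤ 1 * |x - x₀| * ε := by
          apply mul_le_mul (mul_le_mul_of_nonneg_right h1 (abs_nonneg _)) h2
            (abs_nonneg _) (by positivity)
      _ = ε * ‖x - x₀‖ := by rw [Real.norm_eq_abs]; ring
  calc ‖∫ t in (0:ℝ)..1, (t^k * fd (k+1) (c + t*(x - c)) - t^k * fd (k+1) (c + t*(x₀ - c))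
          - (x - x₀) * (t^(k+1) * fd (k+2) (c + t*(x₀ - c))))‖
      ≤ ε * ‖x - x₀‖ * |1 - 0| := intervalIntegral.norm_integral_le_of_norm_le_const hbd
    _ = ε * ‖x - x₀‖ := by norm_num

lemma gdI_continuousOn (hf : IsDn n a b fd) (hn : 2 ≤ n) (hc : c ∈ Set.Icc a b) {k : ℕ}
    (hk : k + 1 ≤ n - 1) : ContinuousOn (gdI fd c k) (Set.Icc a b) := by
  rw [Metric.continuousOn_iff]
  intro x₀ hx₀ ε hε
  have hcont : ContinuousOn (fd (k+1)) (Set.Icc a b) := cont_fd hf hk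
  have huc := isCompact_Icc.uniformContinuousOn_of_continuous hcont
  rw [Metric.uniformContinuousOn_iff] at huc
  obtain ⟨δ, hδ, hδ'⟩ := huc (ε/2) (by linarith)
  refine ⟨δ, hδ, fun x hxI hdist => ?_⟩
  have hIA : IntervalIntegrable (fun t => t^k * fd (k+1) (c + t*(x - c))) volume 0 1 :=
    integrand_cont hcont hc hxI k
  have hIB : IntervalIntegrable (fun t => t^k * fd (k+1) (c + t*(x₀ - c))) volume 0 1 :=
    integrand_cont hcont hc hx₀ k
  have key : gdI fd c k x - gdI fd c k x₀
      = ∫ t in (0:ℝ)..1, (t^k * fd (k+1) (c + t*(x - c)) - t^k * fd (k+1) (c + t*(x₀ - c))) := by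
    rw [intervalIntegral.integral_sub hIA hIB]; rfl
  rw [Real.dist_eq, ← Real.norm_eq_abs, key]
  have hbd : ∀ t ∈ Set.uIoc (0:ℝ) 1,
      ‖t^k * fd (k+1) (c + t*(x - c)) - t^k * fd (k+1) (c + t*(x₀ - c))‖ ≤ ε/2 := by
    intro t ht
    rw [Set.uIoc_of_le zero_le_one] at ht
    have htI : t ∈ Set.Icc (0:ℝ) 1 := ⟨le_of_lt ht.1, ht.2⟩
    have hy : c + t*(x - c) ∈ Set.Icc a b := seg_mem hc hxI htI
    have hy₀ : c + t*(x₀ - c) ∈ Set.Icc a b := seg_mem hc hx₀ htI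
    have hyd : dist (c + t*(x - c)) (c + t*(x₀ - c)) < δ := by
      rw [Real.dist_eq]
      calc |c + t*(x - c) - (c + t*(x₀ - c))| = t * |x - x₀| := by
            rw [show c + t*(x - c) - (c + t*(x₀ - c)) = t * (x - x₀) by ring,
              abs_mul, abs_of_nonneg ht.1.le]
        _ ≤ 1 * |x - x₀| := mul_le_mul_of_nonneg_right ht.2 (abs_nonneg _)
        _ < δ := by rw [one_mul, ← Real.dist_eq]; exact hdist
    have hbb := hδ' _ hy _ hy₀ hyd
    rw [Real.dist_eq] at hbb
    rw [show t^k * fd (k+1) (c + t*(x - c)) - t^k * fd (k+1) (c + t*(x₀ - c))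
      = t^k * (fd (k+1) (c + t*(x - c)) - fd (k+1) (c + t*(x₀ - c))) by ring]
    rw [Real.norm_eq_abs, abs_mul]
    have h1 : |t^k| ≤ 1 := by
      rw [abs_of_nonneg (pow_nonneg ht.1.le _)]
      exact pow_le_one₀ ht.1.le ht.2
    calc |t^k| * |fd (k+1) (c + t*(x - c)) - fd (k+1) (c + t*(x₀ - c))|
        ≤ 1 * (ε/2) := mul_le_mul h1 hbb.le (abs_nonneg _) zero_le_one
      _ = ε/2 := one_mul _
  calc ‖∫ t in (0:ℝ)..1, (t^k * fd (k+1) (c + t*(x - c)) - t^k * fd (k+1) (c + t*(x₀ - c)))‖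
      ≤ ε/2 * |1 - 0| := intervalIntegral.norm_integral_le_of_norm_le_const hbd
    _ < ε := by norm_num; linarith

lemma gdI_top_hasDerivAt_c (hf : IsDn n a b fd) {m : ℕ} (hm : m + 2 = n)
    (hcI : c ∈ Set.Ioo a b) (hc : c ∈ Set.Icc a b) :
    HasDerivAt (gdI fd c m) (fd n c / n) c := by
  subst hm
  rw [hasDerivAt_iff_isLittleO, Asymptotics.isLittleO_iff]
  intro ε hε
  have hd := hf.2.2 c hcI
  rw [hasDerivAt_iff_isLittleO, Asymptotics.isLittleO_iff] at hd
  have h1 := hd hε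
  rw [Metric.eventually_nhds_iff] at h1
  obtain ⟨δ, hδ, hδ'⟩ := h1
  filter_upwards [Metric.ball_mem_nhds c hδ, isOpen_Ioo.mem_nhds hcI] with x hball hxIoo
  have hxI : x ∈ Set.Icc a b := Ioo_subset_Icc_self hxIoo
  have hcont : ContinuousOn (fd (m+1)) (Set.Icc a b) := cont_fd hf (by omega)
  have hIA : IntervalIntegrable (fun t => t^m * fd (m+1) (c + t*(x - c))) volume 0 1 :=
    integrand_cont hcont hc hxI m
  have hIB : IntervalIntegrable (fun t => t^m * fd (m+1) (c + t*(c - c))) volume 0 1 :=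
    integrand_cont hcont hc hc m
  have hIC : IntervalIntegrable (fun t => (x - c) * (t^(m+1) * fd (m+2) c)) volume 0 1 := by
    apply Continuous.intervalIntegrable
    continuity
  have hC : (x - c) • (fd (m+2) c / ((m+2 : ℕ) : ℝ))
      = ∫ t in (0:ℝ)..1, (x - c) * (t^(m+1) * fd (m+2) c) := by
    have hpw : (∫ t in (0:ℝ)..1, t^(m+1)) = 1/((m:ℝ)+2) := by
      rw [integral_pow]
      push_cast
      norm_num
      ring
    rw [intervalIntegral.integral_const_mul, intervalIntegral.integral_mul_const, hpw,
      smul_eq_mul]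
    push_cast
    ring
  have key : gdI fd c m x - gdI fd c m c - (x - c) • (fd (m+2) c / ((m+2 : ℕ) : ℝ))
      = ∫ t in (0:ℝ)..1, (t^m * fd (m+1) (c + t*(x - c)) - t^m * fd (m+1) (c + t*(c - c))
          - (x - c) * (t^(m+1) * fd (m+2) c)) := by
    rw [intervalIntegral.integral_sub (hIA.sub hIB) hIC, intervalIntegral.integral_sub hIA hIB,
      hC]
    rfl
  rw [key]
  have hbd : ∀ t ∈ Set.uIoc (0:ℝ) 1,
      ‖t^m * fd (m+1) (c + t*(x - c)) - t^m * fd (m+1) (c + t*(c - c))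
        - (x - c) * (t^(m+1) * fd (m+2) c)‖ ≤ ε * ‖x - c‖ := by
    intro t ht
    rw [Set.uIoc_of_le zero_le_one] at ht
    have hyd : dist (c + t*(x - c)) c < δ := by
      rw [Real.dist_eq]
      calc |c + t*(x - c) - c| = t * |x - c| := by
            rw [show c + t*(x - c) - c = t * (x - c) by ring, abs_mul, abs_of_nonneg ht.1.le]
        _ ≤ 1 * |x - c| := mul_le_mul_of_nonneg_right ht.2 (abs_nonneg _)
        _ < δ := by rw [one_mul, ← Real.dist_eq]; exact Metric.mem_ball.1 hball
    have hbb := hδ' hyd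
    rw [Real.norm_eq_abs, Real.norm_eq_abs, smul_eq_mul] at hbb
    have heq : t^m * fd (m+1) (c + t*(x - c)) - t^m * fd (m+1) (c + t*(c - c))
        - (x - c) * (t^(m+1) * fd (m+2) c)
        = t^m * (fd (m+1) (c + t*(x - c)) - fd (m+1) c
            - (c + t*(x - c) - c) * fd (m+2) c) := by
      rw [show c + t*(c - c) = c by ring]
      ring
    rw [heq, Real.norm_eq_abs, abs_mul]
    have h1 : |t^m| ≤ 1 := by
      rw [abs_of_nonneg (pow_nonneg ht.1.le _)]
      exact pow_le_one₀ ht.1.le ht.2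
    have h2 : |c + t*(x - c) - c| ≤ |x - c| := by
      rw [show c + t*(x - c) - c = t * (x - c) by ring, abs_mul, abs_of_nonneg ht.1.le]
      calc t * |x - c| ≤ 1 * |x - c| := mul_le_mul_of_nonneg_right ht.2 (abs_nonneg _)
        _ = |x - c| := one_mul _
    calc |t^m| * |fd (m+1) (c + t*(x - c)) - fd (m+1) c - (c + t*(x - c) - c) * fd (m+2) c|
        ≤ 1 * (ε * |x - c|) := by
          apply mul_le_mul h1 (le_trans hbb ?_) (abs_nonneg _) zero_le_one
          exact mul_le_mul_of_nonneg_left h2 hε.le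
      _ = ε * ‖x - c‖ := by rw [Real.norm_eq_abs]; ring
  calc ‖∫ t in (0:ℝ)..1, (t^m * fd (m+1) (c + t*(x - c)) - t^m * fd (m+1) (c + t*(c - c))
          - (x - c) * (t^(m+1) * fd (m+2) c))‖
      ≤ ε * ‖x - c‖ * |1 - 0| := intervalIntegral.norm_integral_le_of_norm_le_const hbd
    _ = ε * ‖x - c‖ := by norm_num

lemma gdI_top_hasDerivAt_ne (hf : IsDn n a b fd) {m : ℕ} (hm : m + 2 = n)
    (hc : c ∈ Set.Icc a b) {x₀ : ℝ} (hx₀ : x₀ ∈ Set.Ioo a b) (hxc : x₀ ≠ c) :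
    ∃ ξ ∈ Set.Ioo a b, HasDerivAt (gdI fd c m) (fd n ξ / ((n : ℕ) : ℝ)) x₀ := by
  subst hm
  obtain ⟨ξ, hξ, hL⟩ := lagrange_rem hf (by omega) hc (Ioo_subset_Icc_self hx₀) hxc
  refine ⟨ξ, hξ, ?_⟩
  have hcx : c - x₀ ≠ 0 := sub_ne_zero.2 (Ne.symm hxc)
  have hS := sum_hasDerivAt hf (by omega) c (k := m) (by omega) hx₀
  have h1 : HasDerivAt (fun y => (c - y)^(m+1)) (-(((m:ℝ)+1) * (c - x₀)^m)) x₀ := by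
    have := ((hasDerivAt_id x₀).const_sub c).pow (m+1)
    refine this.congr_deriv ?_
    simp only [id_eq]
    push_cast
    ring
  have hinv := h1.inv (pow_ne_zero _ hcx)
  have hA := (((hasDerivAt_const x₀ (fd 0 c)).sub hS).mul_const ((m.factorial : ℝ))).mul hinv
  have heq : gdI fd c m =ᶠ[𝓝 x₀] fun y =>
      ((fd 0 c - ∑ j ∈ Finset.range (m+1), fd j y * (c - y)^j / (j.factorial:ℝ))
        * (m.factorial : ℝ)) * ((c - y)^(m+1))⁻¹ := by
    have hU : Set.Ioo a b \ {c} ∈ 𝓝 x₀ :=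
      (isOpen_Ioo.sdiff isClosed_singleton).mem_nhds ⟨hx₀, hxc⟩
    refine Filter.eventuallyEq_of_mem hU (fun y hy => ?_)
    rw [gdI_eq hf (by omega) hc (by omega) (Ioo_subset_Icc_self hy.1) hy.2, div_eq_mul_inv]
  have hfinal := hA.congr_of_eventuallyEq heq
  refine hfinal.congr_deriv ?_
  rw [Finset.sum_range_succ] at hL
  have hfm : ((m+1).factorial:ℝ) = ((m:ℝ)+1) * (m.factorial:ℝ) := by
    push_cast [Nat.factorial_succ]; ring
  have hfm2 : ((m+2).factorial:ℝ) = ((m:ℝ)+2) * (((m:ℝ)+1) * (m.factorial:ℝ)) := by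
    push_cast [Nat.factorial_succ]; ring
  have hm0 : (m.factorial:ℝ) ≠ 0 := Nat.cast_ne_zero.2 m.factorial_ne_zero
  simp only [Pi.inv_apply, Pi.sub_apply, hfm, hfm2, Nat.cast_add, Nat.cast_ofNat] at hL ⊢
  field_simp at hL ⊢
  apply mul_left_cancel₀ (show ((m:ℝ)+1) ≠ 0 by positivity)
  linear_combination ((m:ℝ)+1) * (c-x₀)^m * hL

end Aux


/-- Division lemma: if `f ∈ 𝒟ⁿ([a,b])` (`n ≥ 2`) and `c ∈ [a,b]`, then
`g(x) = (f(x) - f(c))/(x - c)` (with `g(c) = f'(c)`) belongs to `𝒟^{n-1}([a,b])`, and for every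
`x ∈ (a,b)` there is `ξ ∈ (a,b)` with `g^{(n-1)}(x) = f^{(n)}(ξ)/n`. -/
theorem stmt0 (n : ℕ) (hn : 2 ≤ n) (a b : ℝ) (hab : a < b)
    (fd : ℕ → ℝ → ℝ) (hf : IsDn n a b fd) (c : ℝ) (hc : c ∈ Set.Icc a b) :
    ∃ gd : ℕ → ℝ → ℝ,
      (∀ x, gd 0 x = if x = c then fd 1 c else (fd 0 x - fd 0 c) / (x - c)) ∧
      IsDn (n - 1) a b gd ∧
      (∀ x ∈ Set.Ioo a b, ∃ ξ ∈ Set.Ioo a b, gd (n - 1) x = fd n ξ / n) := by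
  classical
  obtain ⟨m, rfl⟩ : ∃ m, n = m + 2 := ⟨n - 2, by omega⟩
  set gd : ℕ → ℝ → ℝ := fun k x =>
    if k = 0 then (if x = c then fd 1 c else (fd 0 x - fd 0 c) / (x - c))
    else if k = m + 1 then deriv (gdI fd c m) x
    else gdI fd c k x with hgd
  have hgd0 : ∀ x ∈ Set.Icc a b, gd 0 x = gdI fd c 0 x := by
    intro x hx
    simp only [hgd, if_pos rfl]
    by_cases h : x = c
    · subst h
      rw [if_pos rfl, gdI_self]
      norm_num
    · rw [if_neg h, gdI_eq hf (by omega) hc (k := 0) (by omega) hx h]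
      have hcx : c - x ≠ 0 := sub_ne_zero.2 (Ne.symm h)
      have hxc : x - c ≠ 0 := sub_ne_zero.2 h
      rw [Finset.sum_range_one]
      field_simp
      ring
  have hgdk : ∀ k, k ≠ 0 → k ≠ m + 1 → gd k = gdI fd c k := by
    intro k h1 h2
    funext x
    simp only [hgd, if_neg h1, if_neg h2]
  have hgdm : ∀ x ∈ Set.Icc a b, gd m x = gdI fd c m x := by
    rcases Nat.eq_zero_or_pos m with h | h
    · subst h; exact hgd0
    · intro x _; rw [hgdk m (by omega) (by omega)]
  have hgdtop : ∀ x, gd (m+1) x = deriv (gdI fd c m) x := by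
    intro x
    simp [hgd]
  have H : ∀ x ∈ Set.Ioo a b, ∃ ξ ∈ Set.Ioo a b,
      HasDerivAt (gdI fd c m) (fd (m+2) ξ / ((m+2 : ℕ) : ℝ)) x := by
    intro x hx
    by_cases hxc : x = c
    · subst hxc
      exact ⟨x, hx, gdI_top_hasDerivAt_c hf rfl hx (Ioo_subset_Icc_self hx)⟩
    · exact gdI_top_hasDerivAt_ne hf rfl hc hx hxc
  refine ⟨gd, ?_, ⟨?_, ?_, ?_⟩, ?_⟩
  · intro x
    simp only [hgd, if_pos rfl]
  · -- derivatives for k+1 < m+1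
    intro k hk x hx
    have hk' : k < m := by omega
    have base := gdI_hasDerivWithin hf (by omega) hc (k := k) (by omega) hx
    have hv : gd (k+1) = gdI fd c (k+1) := hgdk (k+1) (by omega) (by omega)
    rw [hv]
    rcases Nat.eq_zero_or_pos k with h0 | h0
    · subst h0
      exact base.congr (fun y hy => hgd0 y hy) (hgd0 x hx)
    · rw [hgdk k (by omega) (by omega)]
      exact base
  · -- continuity of gd m on Icc
    show ContinuousOn (gd m) (Set.Icc a b)
    exact (gdI_continuousOn hf (by omega) hc (k := m) (by omega)).congr
      (fun x hx => hgdm x hx)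
  · -- top derivative
    intro x hx
    obtain ⟨ξ, hξ, hD⟩ := H x hx
    show HasDerivAt (gd m) (gd (m+1) x) x
    have hval : gd (m+1) x = fd (m+2) ξ / ((m+2 : ℕ) : ℝ) := by
      rw [hgdtop x, hD.deriv]
    rw [hval]
    exact hD.congr_of_eventuallyEq (Filter.eventuallyEq_of_mem (isOpen_Ioo.mem_nhds hx)
      (fun y hy => hgdm y (Ioo_subset_Icc_self hy)))
  · -- mean value
    intro x hx
    obtain ⟨ξ, hξ, hD⟩ := H x hx
    refine ⟨ξ, hξ, ?_⟩
    show gd (m+1) x = _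
    rw [hgdtop x, hD.deriv]
end

section
/- Let n ≥ 1 be an integer, let a < b be real numbers, and let f ∈ 𝒟ⁿ([a,b]) satisfy f^{(n)}(t) ≥ n! for every t ∈ (a,b). If Q is a monic real polynomial of degree n such that |f(x)| = |Q(x)| for every x ∈ [a,b], then f(x) = Q(x) for every x ∈ [a,b]. -/
open Set Polynomial Nat MeasureTheory ENNReal

lemma iterate_derivative_monic_eval {n : ℕ} {Q : Polynomial ℝ} (hQ : Q.Monic)
    (hdeg : Q.natDegree = n) (y : ℝ) :
    (Polynomial.derivative^[n] Q).eval y = (n ! : ℝ) := by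
  have h0 : (Polynomial.derivative^[n] Q).natDegree ≤ 0 := by
    simpa [hdeg] using Polynomial.natDegree_iterate_derivative Q n
  have hC := Polynomial.eq_C_of_natDegree_le_zero h0
  have hco : (Polynomial.derivative^[n] Q).coeff 0 = (n ! : ℝ) := by
    rw [Polynomial.coeff_iterate_derivative]
    simp only [zero_add]
    have : Q.coeff n = 1 := by
      rw [← hdeg]; exact hQ.coeff_natDegree
    rw [this, Nat.descFactorial_self]
    simp
  rw [hC, hco, Polynomial.eval_C]

/-- If `f ∈ 𝒟ⁿ([a,b])` satisfies `f^{(n)}(t) ≥ n!` on `(a,b)` and `|f| = |Q|` on `[a,b]` for a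
monic polynomial `Q` of degree `n`, then `f = Q` on `[a,b]`. -/
theorem stmt2 (n : ℕ) (hn : 1 ≤ n) (a b : ℝ) (hab : a < b)
    (fd : ℕ → ℝ → ℝ) (hf : IsDn n a b fd)
    (hderiv : ∀ t ∈ Set.Ioo a b, (n ! : ℝ) ≤ fd n t)
    (Q : Polynomial ℝ) (hQmonic : Q.Monic) (hQdeg : Q.natDegree = n)
    (habs : ∀ x ∈ Set.Icc a b, |fd 0 x| = |Q.eval x|) :
    ∀ x ∈ Set.Icc a b, fd 0 x = Q.eval x := by
  have hcont : ContinuousOn (fd 0) (Set.Icc a b) := by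
    rcases eq_or_lt_of_le hn with h1 | h2
    · have := hf.2.1
      rw [← h1] at this
      simpa using this
    · exact fun x hx => ((hf.1 0 (by omega) x hx).continuousWithinAt)
  -- key: fd 0 cannot equal -Q on an open subinterval
  have key : ∀ c d : ℝ, a ≤ c → c < d → d ≤ b →
      ¬ (∀ y ∈ Set.Ioo c d, fd 0 y = -Q.eval y) := by
    intro c d hac hcd hdb hneg
    have hsub : Set.Ioo c d ⊆ Set.Ioo a b := Set.Ioo_subset_Ioo hac hdb
    have step : ∀ k, k ≤ n → ∀ y ∈ Set.Ioo c d,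
        fd k y = -(Polynomial.derivative^[k] Q).eval y := by
      intro k
      induction k with
      | zero => intro _ y hy; simpa using hneg y hy
      | succ k ih =>
        intro hk y hy
        have hkn : k ≤ n := by omega
        have ihk := ih hkn
        have hmem : Set.Ioo c d ∈ nhds y := (isOpen_Ioo).mem_nhds hy
        have hd1 : HasDerivAt (fd k) (fd (k+1) y) y := by
          rcases lt_or_eq_of_le hk with hlt | heq
          · have hIcc : Set.Icc a b ∈ nhds y :=
              Icc_mem_nhds (hsub hy).1 (hsub hy).2
            exact (hf.1 k hlt y (Set.mem_Icc_of_Ioo (hsub hy))).hasDerivAt hIcc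
          · have h1 : n - 1 = k := by omega
            have := hf.2.2 y (hsub hy)
            rw [h1] at this
            have h2 : n = k + 1 := by omega
            rw [h2] at this
            exact this
        have hd2 : HasDerivAt (fun z => -(Polynomial.derivative^[k] Q).eval z)
            (-(Polynomial.derivative^[k+1] Q).eval y) y := by
          have := ((Polynomial.derivative^[k] Q).hasDerivAt y).neg
          rw [Function.iterate_succ_apply']; exact this
        have heq : (fun z => -(Polynomial.derivative^[k] Q).eval z) =ᶠ[nhds y] fd k :=
          Filter.eventually_of_mem hmem fun z hz => (ihk z hz).symm
        have hd1' : HasDerivAt (fun z => -(Polynomial.derivative^[k] Q).eval z)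
            (fd (k+1) y) y := hd1.congr_of_eventuallyEq heq
        exact (hd1'.unique hd2)
    obtain ⟨y, hy⟩ := Set.nonempty_Ioo.2 hcd
    have h1 := step n le_rfl y hy
    rw [iterate_derivative_monic_eval hQmonic hQdeg] at h1
    have h2 := hderiv y (hsub hy)
    rw [h1] at h2
    have h3 : (0:ℝ) < (n ! : ℝ) := by positivity
    linarith
  intro x hx
  by_contra hne
  have habsx := habs x hx
  have hfx : fd 0 x = -Q.eval x := by
    rcases abs_eq_abs.1 habsx with h | h
    · exact absurd h hne
    · exact h
  have hQx : Q.eval x ≠ 0 := by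
    intro h0
    apply hne
    rw [hfx, h0, neg_zero]
  -- g = fd 0 - Q is nonzero at x, continuous; get a neighborhood
  set g : ℝ → ℝ := fun z => fd 0 z - Q.eval z with hg
  have hgc : ContinuousWithinAt g (Set.Icc a b) x :=
    ((hcont x hx).sub (Q.continuous_aeval.continuousWithinAt))
  have hgx : g x ≠ 0 := by
    simp only [hg, hfx]
    intro h
    apply hQx
    linarith
  have hev : ∀ᶠ z in nhdsWithin x (Set.Icc a b), g z ≠ 0 := by
    have : ∀ᶠ z in nhdsWithin x (Set.Icc a b), g z ∈ {t : ℝ | t ≠ 0} :=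
      hgc (isOpen_ne.mem_nhds hgx)
    exact this
  have hev' : {z : ℝ | g z ≠ 0} ∈ nhdsWithin x (Set.Icc a b) := hev
  rw [Metric.mem_nhdsWithin_iff] at hev'
  obtain ⟨ε, hε, hball⟩ := hev'
  set c := max a (x - ε) with hc
  set d := min b (x + ε) with hd
  have hxa : a ≤ x := hx.1
  have hxb : x ≤ b := hx.2
  have hcd : c < d := by
    simp only [hc, hd, max_lt_iff, lt_min_iff]
    constructor
    · constructor <;> [exact hab; linarith]
    · constructor <;> [linarith; linarith]
  refine key c d (le_max_left _ _) hcd (min_le_left _ _) ?_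
  intro y hy
  have hy1 : a < y := lt_of_le_of_lt (le_max_left _ _) hy.1
  have hy2 : y < b := lt_of_lt_of_le hy.2 (min_le_left _ _)
  have hy3 : dist y x < ε := by
    rw [Real.dist_eq, abs_lt]
    constructor
    · have := lt_of_le_of_lt (le_max_right a (x - ε)) hy.1
      linarith
    · have := lt_of_lt_of_le hy.2 (min_le_right b (x + ε))
      linarith
  have hyIcc : y ∈ Set.Icc a b := ⟨le_of_lt hy1, le_of_lt hy2⟩
  have hgy : g y ≠ 0 := hball ⟨Metric.mem_ball.2 hy3, hyIcc⟩
  have habsy := habs y hyIcc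
  have hsq : (fd 0 y - Q.eval y) * (fd 0 y + Q.eval y) = 0 := by
    have h1 : (fd 0 y)^2 = (Q.eval y)^2 := by
      rw [← sq_abs (fd 0 y), ← sq_abs (Q.eval y), habsy]
    ring_nf
    nlinarith [h1]
  rcases mul_eq_zero.1 hsq with h | h
  · exact absurd (by simpa [hg] using h) hgy
  · linarith
end

section
/- Let n ≥ 1 be an integer, let a < b be real numbers, and let 0 < p ≤ ∞. Then the infimum of ‖f‖_{p,[a,b]} over all f ∈ 𝒟ⁿ([a,b]) with m_n(f) ≥ n! is equal to D**(n,p,[a,b]), the infimum of ‖Q‖_{p,[a,b]} over all monic real polynomials Q of degree n. -/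
open Set Polynomial Nat MeasureTheory ENNReal

/-! ### Auxiliary machinery for the proof -/

section Aux

open intervalIntegral in
/-- Continuity of a parametric interval integral over `[0,1]`. -/
lemma contOn_param_integral {P : Type*} [MetricSpace P] {K : Set P} (hK : IsCompact K)
    {F : ℝ → P → ℝ}
    (hF : ContinuousOn (fun q : ℝ × P => F q.1 q.2) (Set.Icc (0:ℝ) 1 ×ˢ K)) :
    ContinuousOn (fun p => ∫ t in (0:ℝ)..1, F t p) K := by
  have hint : ∀ p ∈ K, IntervalIntegrable (fun t => F t p) MeasureTheory.volume 0 1 := by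
    intro p hp
    apply ContinuousOn.intervalIntegrable
    rw [Set.uIcc_of_le (by norm_num : (0:ℝ) ≤ 1)]
    have : ContinuousOn (fun t : ℝ => F t p) (Set.Icc 0 1) :=
      hF.comp ((continuous_id.prodMk continuous_const).continuousOn)
        (fun s hs => ⟨hs, hp⟩)
    exact this
  intro p hp
  rw [Metric.continuousWithinAt_iff]
  intro ε hε
  have hKK : IsCompact (Set.Icc (0:ℝ) 1 ×ˢ K) := isCompact_Icc.prod hK
  have huc := hKK.uniformContinuousOn_of_continuous hF
  rw [Metric.uniformContinuousOn_iff] at huc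
  obtain ⟨δ, hδ, hucδ⟩ := huc (ε/2) (by linarith)
  refine ⟨δ, hδ, fun q hq hdq => ?_⟩
  have hbound : ∀ t ∈ Set.Icc (0:ℝ) 1, |F t q - F t p| ≤ ε/2 := by
    intro t ht
    have := hucδ (t, q) ⟨ht, hq⟩ (t, p) ⟨ht, hp⟩ (by
      rw [Prod.dist_eq]
      simp only [_root_.dist_self]
      rw [max_eq_right dist_nonneg]
      exact hdq)
    rw [Real.dist_eq] at this
    exact le_of_lt this
  have hsub : (∫ t in (0:ℝ)..1, F t q) - (∫ t in (0:ℝ)..1, F t p)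
      = ∫ t in (0:ℝ)..1, (F t q - F t p) := by
    rw [intervalIntegral.integral_sub (hint q hq) (hint p hp)]
  rw [Real.dist_eq, hsub]
  calc |∫ t in (0:ℝ)..1, (F t q - F t p)| ≤ (ε/2) * |1 - 0| := by
        rw [← Real.norm_eq_abs]
        apply intervalIntegral.norm_integral_le_of_norm_le_const
        intro t ht
        rw [Set.uIoc_of_le (by norm_num : (0:ℝ) ≤ 1)] at ht
        rw [Real.norm_eq_abs]
        exact hbound t ⟨le_of_lt ht.1, ht.2⟩
    _ < ε := by rw [abs_of_nonneg (by norm_num : (0:ℝ) ≤ 1 - 0)]; linarith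

variable {n : ℕ} {a b : ℝ} {fd : ℕ → ℝ → ℝ}

lemma IsDn.cont (hD : IsDn n a b fd) {k : ℕ} (hk : k ≤ n - 1) :
    ContinuousOn (fd k) (Set.Icc a b) := by
  rcases eq_or_lt_of_le hk with h | h
  · rw [h]; exact hD.2.1
  · intro x hx
    exact (hD.1 k (by omega) x hx).continuousWithinAt

lemma IsDn.hdw (hD : IsDn n a b fd) {k : ℕ} (hk : k + 1 ≤ n - 1) {x : ℝ}
    (hx : x ∈ Set.Icc a b) : HasDerivWithinAt (fd k) (fd (k + 1) x) (Set.Icc a b) x :=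
  hD.1 k (by omega) x hx

lemma IsDn.hda (hD : IsDn n a b fd) (hn : 1 ≤ n) {k : ℕ} (hk : k ≤ n - 1) {x : ℝ}
    (hx : x ∈ Set.Ioo a b) : HasDerivAt (fd k) (fd (k + 1) x) x := by
  rcases eq_or_lt_of_le hk with h | h
  · have h1 : k + 1 = n := by omega
    have := hD.2.2 x hx
    rw [h] at h1 ⊢
    rw [h1]
    exact this
  · exact (hD.hdw (by omega) (Set.mem_Icc_of_Ioo hx)).hasDerivAt
      (Icc_mem_nhds hx.1 hx.2)

/-- If a function has positive derivative at `x`, it takes larger values at some points right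
of `x` and smaller values at some points left of `x` (within any given margin). -/
lemma exists_gt_right_of_deriv_pos {F : ℝ → ℝ} {d x u : ℝ} (hd : HasDerivAt F d x)
    (hpos : 0 < d) (hxu : x < u) : ∃ y ∈ Set.Ioo x u, F x < F y := by
  have hs := hasDerivAt_iff_tendsto_slope.1 hd
  have hev : ∀ᶠ y in nhdsWithin x {x}ᶜ, 0 < slope F x y :=
    hs (Ioi_mem_nhds hpos)
  have hle : nhdsWithin x (Set.Ioo x u) ≤ nhdsWithin x {x}ᶜ := by
    apply nhdsWithin_mono
    intro y hy
    exact fun h => (ne_of_gt hy.1) h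
  have hev2 : ∀ᶠ y in nhdsWithin x (Set.Ioo x u), 0 < slope F x y := hle hev
  have hne : (nhdsWithin x (Set.Ioo x u)).NeBot := by
    apply IsGLB.nhdsWithin_neBot
    · exact isGLB_Ioo hxu
    · exact Set.nonempty_Ioo.2 hxu
  obtain ⟨y, hy, hy2⟩ := (hev2.and self_mem_nhdsWithin).exists
  refine ⟨y, hy2, ?_⟩
  rw [slope_def_field] at hy
  have hyx : 0 < y - x := sub_pos.2 hy2.1
  rcases div_pos_iff.1 hy with ⟨h1, _⟩ | ⟨_, h2⟩
  · linarith
  · linarith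

lemma exists_lt_left_of_deriv_pos {F : ℝ → ℝ} {d x l : ℝ} (hd : HasDerivAt F d x)
    (hpos : 0 < d) (hlx : l < x) : ∃ y ∈ Set.Ioo l x, F y < F x := by
  have hs := hasDerivAt_iff_tendsto_slope.1 hd
  have hev : ∀ᶠ y in nhdsWithin x {x}ᶜ, 0 < slope F x y := hs (Ioi_mem_nhds hpos)
  have hle : nhdsWithin x (Set.Ioo l x) ≤ nhdsWithin x {x}ᶜ := by
    apply nhdsWithin_mono
    intro y hy
    exact fun h => (ne_of_lt hy.2) h
  have hev2 : ∀ᶠ y in nhdsWithin x (Set.Ioo l x), 0 < slope F x y := hle hev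
  have hne : (nhdsWithin x (Set.Ioo l x)).NeBot := by
    apply IsLUB.nhdsWithin_neBot
    · exact isLUB_Ioo hlx
    · exact Set.nonempty_Ioo.2 hlx
  obtain ⟨y, hy, hy2⟩ := (hev2.and self_mem_nhdsWithin).exists
  refine ⟨y, hy2, ?_⟩
  rw [slope_def_field] at hy
  have hyx : y - x < 0 := sub_neg.2 hy2.2
  rcases div_pos_iff.1 hy with ⟨_, h2⟩ | ⟨h1, _⟩
  · linarith
  · linarith

end Aux


section Aux2

variable {n : ℕ} {a b : ℝ} {fd : ℕ → ℝ → ℝ}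

/-- Darboux-type dichotomy: if `|f⁽ⁿ⁾| ≥ n!` throughout `(a,b)`, then `f⁽ⁿ⁾ ≥ n!`
throughout, or `f⁽ⁿ⁾ ≤ -n!` throughout. -/
lemma sign_dichotomy (hD : IsDn n a b fd) (hn : 1 ≤ n) (hab : a < b)
    (hm : ∀ t ∈ Set.Ioo a b, (n ! : ℝ) ≤ |fd n t|) :
    (∀ t ∈ Set.Ioo a b, (n ! : ℝ) ≤ fd n t) ∨ (∀ t ∈ Set.Ioo a b, fd n t ≤ -(n ! : ℝ)) := by
  have hfact : (0:ℝ) < (n ! : ℝ) := by positivity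
  by_contra hcon
  push_neg at hcon
  obtain ⟨⟨t1, ht1, ht1'⟩, ⟨t2, ht2, ht2'⟩⟩ := hcon
  -- fd n t1 < n! together with |fd n t1| ≥ n! forces fd n t1 ≤ -n! < 0
  have hneg : fd n t1 ≤ -(n ! : ℝ) := by
    have := hm t1 ht1
    rcases abs_cases (fd n t1) with ⟨h, _⟩ | ⟨h, _⟩ <;> linarith
  have hpos : (n ! : ℝ) ≤ fd n t2 := by
    have := hm t2 ht2
    rcases abs_cases (fd n t2) with ⟨h, _⟩ | ⟨h, _⟩ <;> linarith
  set F := fd (n - 1) with hF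
  have hda : ∀ x ∈ Set.Ioo a b, HasDerivAt F (fd n x) x := by
    intro x hx
    exact hD.2.2 x hx
  have hcont : ContinuousOn F (Set.Icc a b) := hD.2.1
  have key : ∀ s t : ℝ, s ∈ Set.Ioo a b → t ∈ Set.Ioo a b → s < t →
      (n ! : ℝ) ≤ fd n s → fd n t ≤ -(n ! : ℝ) → False := by
    -- F' > 0 at s, F' < 0 at t, s < t : max of F on [s,t] is interior, derivative 0
    intro s t hs ht hst hds hdt
    obtain ⟨ξ, hξ, hmax⟩ := (isCompact_Icc (a := s) (b := t)).exists_isMaxOn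
      (Set.nonempty_Icc.2 (le_of_lt hst))
      (hcont.mono (fun y hy => ⟨le_trans (le_of_lt hs.1) hy.1, le_trans hy.2 (le_of_lt ht.2)⟩))
    have hξab : ξ ∈ Set.Ioo a b := ⟨lt_of_lt_of_le hs.1 hξ.1, lt_of_le_of_lt hξ.2 ht.2⟩
    -- ξ ≠ s
    have hξs : ξ ≠ s := by
      intro h
      obtain ⟨y, hy, hlt⟩ := exists_gt_right_of_deriv_pos (hda s hs)
        (lt_of_lt_of_le hfact hds) hst
      have := hmax (Set.mem_Icc.2 ⟨le_of_lt hy.1, le_of_lt hy.2⟩)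
      rw [h] at this
      exact absurd this (not_le.2 hlt)
    have hξt : ξ ≠ t := by
      intro h
      obtain ⟨y, hy, hlt⟩ := exists_lt_left_of_deriv_pos
        (F := fun z => -F z) (d := -(fd n t)) ((hda t ht).neg)
        (by linarith) hst
      have := hmax (Set.mem_Icc.2 ⟨le_of_lt hy.1, le_of_lt hy.2⟩)
      rw [h] at this
      have : F y > F t := by
        have := hlt
        simp only [neg_lt_neg_iff] at this
        linarith
      rw [h] at hmax
      exact absurd (hmax (Set.mem_Icc.2 ⟨le_of_lt hy.1, le_of_lt hy.2⟩)) (not_le.2 this)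
    have hξIoo : ξ ∈ Set.Ioo s t := ⟨lt_of_le_of_ne hξ.1 (Ne.symm hξs), lt_of_le_of_ne hξ.2 hξt⟩
    have hloc : IsLocalMax F ξ := by
      apply hmax.isLocalMax
      exact Icc_mem_nhds hξIoo.1 hξIoo.2
    have := hloc.hasDerivAt_eq_zero (hda ξ hξab)
    have h9 := hm ξ hξab
    rw [‹fd n ξ = 0›] at h9
    simp at h9
    exact absurd h9 (Nat.factorial_ne_zero n)
  rcases lt_trichotomy t1 t2 with h | h | h
  · -- t1 < t2 : fd n t1 ≤ -n! < 0 < n! ≤ fd n t2 : min of F interior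
    -- use key with -F ... easier: apply key to the function with s := t1? pattern is pos-then-neg.
    -- Here neg-then-pos: use min instead: replace F by -F: (-F)' = -fd n: at t1: -fd n t1 ≥ n!, at t2: ≤ -n!.
    have key2 : False := by
      -- mimic key with G := -F
      obtain ⟨ξ, hξ, hmin⟩ := (isCompact_Icc (a := t1) (b := t2)).exists_isMinOn
        (Set.nonempty_Icc.2 (le_of_lt h))
        (hcont.mono (fun y hy => ⟨le_trans (le_of_lt ht1.1) hy.1, le_trans hy.2 (le_of_lt ht2.2)⟩))
      have hξab : ξ ∈ Set.Ioo a b := ⟨lt_of_lt_of_le ht1.1 hξ.1, lt_of_le_of_lt hξ.2 ht2.2⟩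
      have hξs : ξ ≠ t1 := by
        intro heq
        obtain ⟨y, hy, hlt⟩ := exists_gt_right_of_deriv_pos
          (F := fun z => -F z) (d := -(fd n t1)) ((hda t1 ht1).neg) (by linarith) h
        have h2 := hmin (Set.mem_Icc.2 ⟨le_of_lt hy.1, le_of_lt hy.2⟩)
        rw [heq] at h2
        have : F y < F t1 := by simp only [neg_lt_neg_iff] at hlt; linarith
        exact absurd h2 (not_le.2 this)
      have hξt : ξ ≠ t2 := by
        intro heq
        obtain ⟨y, hy, hlt⟩ := exists_lt_left_of_deriv_pos (hda t2 ht2)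
          (lt_of_lt_of_le hfact hpos) h
        have h2 := hmin (Set.mem_Icc.2 ⟨le_of_lt hy.1, le_of_lt hy.2⟩)
        rw [heq] at h2
        exact absurd h2 (not_le.2 hlt)
      have hξIoo : ξ ∈ Set.Ioo t1 t2 :=
        ⟨lt_of_le_of_ne hξ.1 (Ne.symm hξs), lt_of_le_of_ne hξ.2 hξt⟩
      have hloc : IsLocalMin F ξ := by
        apply hmin.isLocalMin
        exact Icc_mem_nhds hξIoo.1 hξIoo.2
      have hz := hloc.hasDerivAt_eq_zero (hda ξ hξab)
      have h9 := hm ξ hξab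
      rw [hz] at h9
      simp at h9
      exact absurd h9 (Nat.factorial_ne_zero n)
    exact key2
  · rw [h] at hneg; linarith
  · exact key t2 t1 ht2 ht1 h hpos hneg

/-- If `ζ` is a minimizer of `|φ|` on `[a,b]` then subtracting `φ ζ` decreases `|φ|`
pointwise. -/
lemma abs_sub_min_le {φf : ℝ → ℝ} (hφf : ContinuousOn φf (Set.Icc a b)) (hab : a ≤ b)
    {ζ : ℝ} (hζ : ζ ∈ Set.Icc a b) (hmin : ∀ y ∈ Set.Icc a b, |φf ζ| ≤ |φf y|) :
    ∀ x ∈ Set.Icc a b, |φf x - φf ζ| ≤ |φf x| := by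
  intro x hx
  rcases eq_or_ne (φf ζ) 0 with h0 | h0
  · rw [h0, sub_zero]
  · -- φf has no zero on [a,b], hence constant sign
    have hnz : ∀ y ∈ Set.Icc a b, φf y ≠ 0 := by
      intro y hy hy0
      have := hmin y hy
      rw [hy0] at this
      simp at this
      exact h0 this
    have hsign : φf x * φf ζ > 0 := by
      by_contra hns
      push_neg at hns
      -- φf x and φf ζ have opposite (weak) signs: IVT gives a zero between them
      have hx0 : φf x ≠ 0 := hnz x hx
      have huIcc : Set.uIcc x ζ ⊆ Set.Icc a b := Set.uIcc_subset_Icc hx hζ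
      have hcont2 : ContinuousOn φf (Set.uIcc x ζ) := hφf.mono huIcc
      have h0mem : (0:ℝ) ∈ Set.uIcc (φf x) (φf ζ) := by
        rcases mul_nonpos_iff.1 hns with ⟨h1, h2⟩ | ⟨h1, h2⟩
        · exact Set.mem_uIcc.2 (Or.inr ⟨h2, h1⟩)
        · exact Set.mem_uIcc.2 (Or.inl ⟨h1, h2⟩)
      obtain ⟨z, hz, hz0⟩ := intermediate_value_uIcc hcont2 h0mem
      exact hnz z (huIcc hz) hz0
    rcases lt_or_gt_of_ne h0 with hneg | hpos
    · -- φf ζ < 0, so φf x < 0 as well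
      have hxneg : φf x < 0 := by nlinarith
      have h1 : |φf ζ| ≤ |φf x| := hmin x hx
      rw [abs_of_neg hneg, abs_of_neg hxneg] at h1
      rw [abs_of_neg hxneg]
      rw [abs_of_nonpos (by linarith)]
      linarith
    · have hxpos : φf x > 0 := by nlinarith
      have h1 : |φf ζ| ≤ |φf x| := hmin x hx
      rw [abs_of_pos hpos, abs_of_pos hxpos] at h1
      rw [abs_of_pos hxpos]
      rw [abs_of_nonneg (by linarith)]
      linarith

/-- Perturbation: an arbitrary vector of points of `[a,b]` can be approximated by an
injective vector of points of `[a,b]` avoiding a given finite set. -/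
lemma exists_perturb (hab : a < b) :
    ∀ (j : ℕ) (w : Fin j → ℝ), (∀ i, w i ∈ Set.Icc a b) → ∀ (G : Finset ℝ) (ε : ℝ), 0 < ε →
    ∃ w' : Fin j → ℝ, (∀ i, w' i ∈ Set.Icc a b) ∧ (∀ i, |w' i - w i| < ε) ∧
      Function.Injective w' ∧ (∀ i, w' i ∉ G) := by
  intro j
  induction j with
  | zero =>
    intro w _ G ε hε
    exact ⟨w, fun i => i.elim0, fun i => i.elim0, fun i => i.elim0, fun i => i.elim0⟩
  | succ j ih =>
    intro w hw G ε hε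
    -- choose the head point first
    set l : ℝ := max a (w 0 - ε/2) with hl
    set u : ℝ := min b (w 0 + ε/2) with hu
    have hw0 := hw 0
    have hlu : l < u := by
      rw [hl, hu]
      rcases hw0 with ⟨h1, h2⟩
      apply max_lt <;> apply lt_min <;> linarith
    have hinf : (Set.Ioo l u).Infinite := Set.infinite_coe_iff.1 (Set.Ioo.infinite hlu)
    have hne : ((Set.Ioo l u) \ ↑G).Nonempty := (hinf.diff (Finset.finite_toSet G)).nonempty
    obtain ⟨z, hz, hzG⟩ := hne
    have hzab : z ∈ Set.Icc a b := by
      constructor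
      · exact le_trans (le_max_left _ _) (le_of_lt hz.1)
      · exact le_trans (le_of_lt hz.2) (min_le_left _ _)
    have hzw : |z - w 0| < ε := by
      rw [abs_lt]
      constructor
      · have := lt_of_le_of_lt (le_max_right a (w 0 - ε/2)) hz.1
        linarith
      · have := lt_of_lt_of_le hz.2 (min_le_right b (w 0 + ε/2))
        linarith
    obtain ⟨w', hw'1, hw'2, hw'3, hw'4⟩ :=
      ih (fun i => w i.succ) (fun i => hw i.succ) (insert z G) ε hε
    refine ⟨Fin.cons z w', ?_, ?_, ?_, ?_⟩
    · intro i
      refine Fin.cases ?_ ?_ i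
      · exact hzab
      · intro k; simpa using hw'1 k
    · intro i
      refine Fin.cases ?_ ?_ i
      · simpa using hzw
      · intro k; simpa using hw'2 k
    · have hznr : ∀ k, w' k ≠ z := by
        intro k hk
        exact hw'4 k (by rw [hk]; exact Finset.mem_insert_self z G)
      intro i1 i2 h12
      rcases Fin.eq_zero_or_eq_succ i1 with h1 | ⟨k1, rfl⟩ <;>
        rcases Fin.eq_zero_or_eq_succ i2 with h2 | ⟨k2, rfl⟩
      · rw [h1, h2]
      · subst h1; rw [Fin.cons_zero, Fin.cons_succ] at h12
        exact absurd h12.symm (hznr k2)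
      · subst h2; rw [Fin.cons_succ, Fin.cons_zero] at h12
        exact absurd h12 (hznr k1)
      · rw [Fin.cons_succ, Fin.cons_succ] at h12
        rw [hw'3 h12]
    · intro i
      refine Fin.cases ?_ ?_ i
      · simpa using hzG
      · intro k
        simp only [Fin.cons_succ]
        exact fun hmem => hw'4 k (Finset.mem_insert_of_mem hmem)

end Aux2


section DD

/-- Divided difference of `f` over the nodes of a finite set `S`. -/
noncomputable def dd (f : ℝ → ℝ) (S : Finset ℝ) : ℝ :=
  ∑ x ∈ S, f x / ∏ y ∈ S.erase x, (x - y)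

lemma dd_singleton (f : ℝ → ℝ) (x : ℝ) : dd f {x} = f x := by
  simp [dd]

lemma dd_insert_expand (f : ℝ → ℝ) (S : Finset ℝ) {x : ℝ} (hx : x ∉ S) :
    dd f (insert x S) = f x / ∏ y ∈ S, (x - y)
      + ∑ z ∈ S, f z / ((z - x) * ∏ y ∈ S.erase z, (z - y)) := by
  rw [dd, Finset.sum_insert hx, Finset.erase_insert hx]
  congr 1
  apply Finset.sum_congr rfl
  intro z hz
  have hzx : z ≠ x := fun h => hx (h ▸ hz)
  rw [Finset.erase_insert_of_ne hzx.symm]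
  rw [Finset.prod_insert (fun h => hx (Finset.mem_of_mem_erase h))]

/-- The fundamental recurrence for divided differences, in termwise form. -/
lemma dd_rec (f : ℝ → ℝ) (S : Finset ℝ) {x y : ℝ} (hx : x ∉ S) (hy : y ∉ S) (hxy : x ≠ y)
    (hS : ∀ z ∈ S, ∀ w ∈ S.erase z, z - w ≠ 0) :
    dd f (insert x S) - dd f (insert y S) = (x - y) * dd f (insert x (insert y S)) := by
  have hxyS : x ∉ insert y S := by
    simp only [Finset.mem_insert]
    exact fun h => h.elim hxy (fun h => hx h)
  have hPz : ∀ z ∈ S, (∏ w ∈ S.erase z, (z - w)) ≠ 0 := by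
    intro z hz
    rw [Finset.prod_ne_zero_iff]
    exact fun w hw => hS z hz w hw
  rw [dd_insert_expand f S hx, dd_insert_expand f S hy, dd_insert_expand f (insert y S) hxyS]
  rw [Finset.sum_insert hy, Finset.erase_insert hy, Finset.prod_insert hy]
  have hsum2 : ∑ z ∈ S, f z / ((z - x) * ∏ w ∈ (insert y S).erase z, (z - w))
      = ∑ z ∈ S, f z / ((z - x) * ((z - y) * ∏ w ∈ S.erase z, (z - w))) := by
    apply Finset.sum_congr rfl
    intro z hz
    have hzy : z ≠ y := fun h => hy (h ▸ hz)
    rw [Finset.erase_insert_of_ne hzy.symm, Finset.prod_insert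
      (fun h => hy (Finset.mem_of_mem_erase h))]
  rw [hsum2]
  rw [mul_add, mul_add, Finset.mul_sum]
  have hxyne : x - y ≠ 0 := sub_ne_zero.2 hxy
  have hterm : ∀ z ∈ S, (x - y) * (f z / ((z - x) * ((z - y) * ∏ w ∈ S.erase z, (z - w))))
      = f z / ((z - x) * ∏ w ∈ S.erase z, (z - w))
        - f z / ((z - y) * ∏ w ∈ S.erase z, (z - w)) := by
    intro z hz
    have hzx : z - x ≠ 0 := sub_ne_zero.2 (fun h => hx (h ▸ hz))
    have hzy : z - y ≠ 0 := sub_ne_zero.2 (fun h => hy (h ▸ hz))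
    have hPzz := hPz z hz
    field_simp
    ring
  rw [Finset.sum_congr rfl hterm, Finset.sum_sub_distrib]
  have hPx : (∏ w ∈ S, (x - w)) ≠ 0 := by
    rw [Finset.prod_ne_zero_iff]
    exact fun w hw => sub_ne_zero.2 (fun h => hx (h ▸ hw))
  have hPy : (∏ w ∈ S, (y - w)) ≠ 0 := by
    rw [Finset.prod_ne_zero_iff]
    exact fun w hw => sub_ne_zero.2 (fun h => hy (h ▸ hw))
  have h1 : (x - y) * (f x / ((x - y) * ∏ w ∈ S, (x - w))) = f x / ∏ w ∈ S, (x - w) := by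
    field_simp
  have h2 : (x - y) * (f y / ((y - x) * ∏ w ∈ S, (y - w))) = -(f y / ∏ w ∈ S, (y - w)) := by
    have hyx : y - x ≠ 0 := sub_ne_zero.2 (Ne.symm hxy)
    field_simp
    ring
  rw [h1, h2]
  ring

/-- The coefficient of degree `S.card - 1` of the Lagrange interpolation polynomial is the
divided difference. -/
lemma interp_coeff (f : ℝ → ℝ) (S : Finset ℝ) (hS : S.Nonempty) :
    ((Lagrange.interpolate S id) f).coeff (S.card - 1) = dd f S := by
  rw [Lagrange.interpolate_apply, Polynomial.finset_sum_coeff, dd]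
  apply Finset.sum_congr rfl
  intro i hi
  rw [Polynomial.coeff_C_mul]
  have hbasis : Lagrange.basis S id i = Polynomial.C (∏ j ∈ S.erase i, ((i:ℝ) - j)⁻¹)
      * ∏ j ∈ S.erase i, (Polynomial.X - Polynomial.C j) := by
    rw [Lagrange.basis, map_prod, ← Finset.prod_mul_distrib]
    rfl
  rw [hbasis, Polynomial.coeff_C_mul]
  have hM : (∏ j ∈ S.erase i, (Polynomial.X - Polynomial.C j) : Polynomial ℝ).coeff (S.card - 1)
      = 1 := by
    have hdeg : (∏ j ∈ S.erase i, (Polynomial.X - Polynomial.C j) : Polynomial ℝ).natDegree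
        = S.card - 1 := by
      rw [Polynomial.natDegree_prod _ _ (fun j _ => Polynomial.X_sub_C_ne_zero j)]
      simp [Polynomial.natDegree_X_sub_C, Finset.card_erase_of_mem hi]
    have hmonic : (∏ j ∈ S.erase i, (Polynomial.X - Polynomial.C j) : Polynomial ℝ).Monic :=
      Polynomial.monic_prod_of_monic _ _ (fun j _ => Polynomial.monic_X_sub_C j)
    rw [← hdeg]
    exact hmonic.coeff_natDegree
  rw [hM, mul_one, Finset.prod_inv_distrib]
  rw [div_eq_mul_inv]

lemma interp_natDegree_le (f : ℝ → ℝ) (S : Finset ℝ) (hS : S.Nonempty) :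
    ((Lagrange.interpolate S id) f).natDegree ≤ S.card - 1 := by
  by_cases h0 : (Lagrange.interpolate S id) f = 0
  · rw [h0]; simp
  · have := Lagrange.degree_interpolate_lt (s := S) f (Set.injOn_id _)
    have h2 := (Polynomial.natDegree_lt_iff_degree_lt h0).2 this
    omega

end DD

section Entry

variable {n : ℕ} {a b : ℝ} {fd : ℕ → ℝ → ℝ}

/-- Entry inequality: all divided differences of order `n` over distinct nodes in `[a,b]`
are at least `1`, when `f⁽ⁿ⁾ ≥ n!` on `(a,b)`. -/
lemma dd_ge_one (hD : IsDn n a b fd) (hn : 1 ≤ n) (hab : a < b)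
    (hpos : ∀ t ∈ Set.Ioo a b, (n ! : ℝ) ≤ fd n t)
    (S : Finset ℝ) (hcard : S.card = n + 1) (hsub : ↑S ⊆ Set.Icc a b) :
    1 ≤ dd (fd 0) S := by
  classical
  set P : Polynomial ℝ := (Lagrange.interpolate S id) (fd 0) with hP
  have hSne : S.Nonempty := Finset.card_pos.1 (by omega)
  have hvanish : ∀ s ∈ S, fd 0 s - P.eval s = 0 := by
    intro s hs
    rw [hP]
    rw [show P.eval s = Polynomial.eval (id s) ((Lagrange.interpolate S id) (fd 0)) from rfl]
    rw [Lagrange.eval_interpolate_at_node (fd 0) (Set.injOn_id _) hs]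
    ring
  set hF : ℕ → ℝ → ℝ := fun k x => fd k x - (Polynomial.derivative^[k] P).eval x with hFdef
  have hFc : ∀ k, k ≤ n - 1 → ContinuousOn (hF k) (Set.Icc a b) := by
    intro k hk
    exact (hD.cont hk).sub (Polynomial.continuous_aeval _).continuousOn
  have hFd : ∀ k, k ≤ n - 1 → ∀ x ∈ Set.Ioo a b, HasDerivAt (hF k) (hF (k + 1) x) x := by
    intro k hk x hx
    have h1 := hD.hda hn hk hx
    have h2 : HasDerivAt (fun y => (Polynomial.derivative^[k] P).eval y)
        ((Polynomial.derivative^[k+1] P).eval x) x := by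
      rw [Function.iterate_succ_apply']
      exact (Polynomial.derivative^[k] P).hasDerivAt x
    exact h1.sub h2
  have key : ∀ k, k ≤ n → ∃ g : Fin (n + 1 - k) → ℝ, StrictMono g ∧
      (∀ i, g i ∈ Set.Icc a b) ∧ (1 ≤ k → ∀ i, g i ∈ Set.Ioo a b) ∧
      (∀ i, hF k (g i) = 0) := by
    intro k
    induction k with
    | zero =>
      intro _
      have hc : S.card = n + 1 - 0 := by omega
      set iso := S.orderIsoOfFin hc with hiso
      refine ⟨fun i => (iso i : ℝ), ?_, ?_, ?_, ?_⟩
      · intro i j hij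
        exact iso.strictMono hij
      · intro i
        exact hsub (iso i).2
      · omega
      · intro i
        simp only [hFdef, Function.iterate_zero, id_eq]
        exact hvanish _ (iso i).2
    | succ k ih =>
      intro hk1
      obtain ⟨g, hgm, hgIcc, _, hgz⟩ := ih (by omega)
      have hlen : n + 1 - k = (n - k) + 1 := by omega
      -- reindex g on Fin ((n-k)+1)
      set g' : Fin ((n - k) + 1) → ℝ := fun i => g (Fin.cast hlen.symm i) with hg'
      have hg'm : StrictMono g' := fun i j hij => hgm (by simpa using hij)
      have hg'Icc : ∀ i, g' i ∈ Set.Icc a b := fun i => hgIcc _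
      have hg'z : ∀ i, hF k (g' i) = 0 := fun i => hgz _
      have hstep : ∀ i : Fin (n - k), ∃ ξ ∈ Set.Ioo (g' i.castSucc) (g' i.succ),
          hF (k+1) ξ = 0 := by
        intro i
        have hlt : g' i.castSucc < g' i.succ := hg'm Fin.castSucc_lt_succ
        have hIccsub : Set.Icc (g' i.castSucc) (g' i.succ) ⊆ Set.Icc a b := by
          intro y hy
          exact ⟨le_trans (hg'Icc i.castSucc).1 hy.1, le_trans hy.2 (hg'Icc i.succ).2⟩
        have hIoosub : Set.Ioo (g' i.castSucc) (g' i.succ) ⊆ Set.Ioo a b := by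
          intro y hy
          exact ⟨lt_of_le_of_lt (hg'Icc i.castSucc).1 hy.1,
            lt_of_lt_of_le hy.2 (hg'Icc i.succ).2⟩
        obtain ⟨c, hc, hc0⟩ := exists_hasDerivAt_eq_zero (f := hF k) (f' := hF (k+1)) hlt
          ((hFc k (by omega)).mono hIccsub)
          (by rw [hg'z i.castSucc, hg'z i.succ])
          (fun x hx => hFd k (by omega) x (hIoosub hx))
        exact ⟨c, hc, hc0⟩
      choose ξ hξmem hξz using hstep
      have hlen2 : n + 1 - (k + 1) = n - k := by omega
      refine ⟨fun i => ξ (Fin.cast hlen2 i), ?_, ?_, ?_, ?_⟩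
      · -- strict mono
        have hm : StrictMono ξ := by
          rcases Nat.eq_zero_or_pos (n - k) with h0 | hpos'
          · intro i j hij
            exact absurd (h0 ▸ i).2 (by omega)
          · have h1 : n - k = (n - k - 1) + 1 := by omega
            -- use lt_succ criterion via pairwise chain
            intro i j hij
            -- ξ i < g' i.succ ≤ g' j.castSucc < ξ j  when i < j
            have h2 : g' i.succ ≤ g' j.castSucc := by
              apply hg'm.monotone
              simp only [Fin.le_def, Fin.val_succ, Fin.coe_castSucc]
              omega
            exact lt_trans (hξmem i).2 (lt_of_le_of_lt h2 (hξmem j).1)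
        intro i j hij
        exact hm (by simpa using hij)
      · intro i
        have h1 := hξmem (Fin.cast hlen2 i)
        have h2 := hg'Icc (Fin.cast hlen2 i).castSucc
        have h3 := hg'Icc (Fin.cast hlen2 i).succ
        exact ⟨le_trans h2.1 (le_of_lt h1.1), le_trans (le_of_lt h1.2) h3.2⟩
      · intro _ i
        have h1 := hξmem (Fin.cast hlen2 i)
        have h2 := hg'Icc (Fin.cast hlen2 i).castSucc
        have h3 := hg'Icc (Fin.cast hlen2 i).succ
        exact ⟨lt_of_le_of_lt h2.1 h1.1, lt_of_lt_of_le h1.2 h3.2⟩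
      · intro i
        exact hξz (Fin.cast hlen2 i)
  obtain ⟨g, _, _, hgIoo, hgz⟩ := key n le_rfl
  have h1 : (1 : ℕ) = n + 1 - n := by omega
  have hξ : ∃ ξ ∈ Set.Ioo a b, hF n ξ = 0 := by
    refine ⟨g ⟨0, by omega⟩, hgIoo hn _, hgz _⟩
  obtain ⟨ξ, hξIoo, hξz⟩ := hξ
  -- compute the n-th derivative of P
  have hdegP : P.natDegree ≤ n := by
    have h5 := interp_natDegree_le (fd 0) S hSne
    rw [← hP] at h5
    omega
  have hPn : (Polynomial.derivative^[n] P) = Polynomial.C ((n ! : ℝ) * dd (fd 0) S) := by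
    have hnd : (Polynomial.derivative^[n] P).natDegree ≤ 0 := by
      have := Polynomial.natDegree_iterate_derivative P n
      omega
    rw [Polynomial.eq_C_of_natDegree_le_zero hnd]
    congr 1
    have hc : S.card - 1 = n := by omega
    rw [Polynomial.coeff_iterate_derivative]
    simp only [Nat.zero_add, Nat.descFactorial_self, nsmul_eq_mul]
    rw [← interp_coeff (fd 0) S hSne, ← hP, hc]
  have heval : fd n ξ = (n ! : ℝ) * dd (fd 0) S := by
    have := hξz
    rw [hFdef] at this
    simp only at this
    rw [hPn] at this
    simp at this
    linarith [this]
  have hfact : (0:ℝ) < (n ! : ℝ) := by positivity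
  have := hpos ξ hξIoo
  rw [heval] at this
  nlinarith

end Entry


section VD

/-- Iterated "Hermite–Genocchi"-type integral functional. `Vd fd m c s ws x` represents the
divided difference of `y ↦ fd m (c + s y)` at the nodes `ws ++ [x]`, counted from level `m`. -/
noncomputable def Vd (fd : ℕ → ℝ → ℝ) : ℕ → ℝ → ℝ → List ℝ → ℝ → ℝ
  | m, c, s, [], x => fd m (c + s * x)
  | m, c, s, w :: ws, x =>
      ∫ t in (0:ℝ)..1, s * Vd fd (m + 1) (c + s * (1 - t) * w) (s * t) ws x

@[simp] lemma Vd_nil (fd : ℕ → ℝ → ℝ) (m : ℕ) (c s x : ℝ) :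
    Vd fd m c s [] x = fd m (c + s * x) := rfl

lemma Vd_cons (fd : ℕ → ℝ → ℝ) (m : ℕ) (c s x w : ℝ) (ws : List ℝ) :
    Vd fd m c s (w :: ws) x
      = ∫ t in (0:ℝ)..1, s * Vd fd (m + 1) (c + s * (1 - t) * w) (s * t) ws x := rfl

/-- Admissible affine reparametrizations of `[a,b]`. -/
def Kcs (a b : ℝ) : Set (ℝ × ℝ) :=
  {p | p.2 ∈ Set.Icc (0:ℝ) 1 ∧ p.1 + p.2 * a ∈ Set.Icc a b ∧ p.1 + p.2 * b ∈ Set.Icc a b}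

lemma Kcs_base (a b : ℝ) (hab : a ≤ b) : ((0:ℝ), (1:ℝ)) ∈ Kcs a b := by
  refine ⟨⟨zero_le_one, le_refl 1⟩, ?_, ?_⟩
  · simp [Set.mem_Icc, hab]
  · simp [Set.mem_Icc, hab]

lemma Kcs_maps {a b : ℝ} (hab : a ≤ b) {p : ℝ × ℝ} (hp : p ∈ Kcs a b) {y : ℝ}
    (hy : y ∈ Set.Icc a b) : p.1 + p.2 * y ∈ Set.Icc a b := by
  obtain ⟨⟨hs0, hs1⟩, ⟨ha1, ha2⟩, ⟨hb1, hb2⟩⟩ := hp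
  constructor
  · nlinarith [hy.1, hy.2]
  · nlinarith [hy.1, hy.2]

lemma Kcs_step {a b : ℝ} (hab : a ≤ b) {p : ℝ × ℝ} (hp : p ∈ Kcs a b) {t w : ℝ}
    (ht : t ∈ Set.Icc (0:ℝ) 1) (hw : w ∈ Set.Icc a b) :
    (p.1 + p.2 * (1 - t) * w, p.2 * t) ∈ Kcs a b := by
  have hs0 := hp.1.1
  have hs1 := hp.1.2
  have hconv : ∀ y ∈ Set.Icc a b, (1 - t) * w + t * y ∈ Set.Icc a b := by
    intro y hy
    constructor
    · nlinarith [hw.1, hw.2, hy.1, hy.2, ht.1, ht.2]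
    · nlinarith [hw.1, hw.2, hy.1, hy.2, ht.1, ht.2]
  refine ⟨⟨?_, ?_⟩, ?_, ?_⟩
  · show (0:ℝ) ≤ p.2 * t
    nlinarith [ht.1]
  · show p.2 * t ≤ 1
    nlinarith [ht.1, ht.2]
  · show p.1 + p.2 * (1 - t) * w + p.2 * t * a ∈ Set.Icc a b
    have h1 : p.1 + p.2 * (1 - t) * w + p.2 * t * a
        = p.1 + p.2 * ((1 - t) * w + t * a) := by ring
    rw [h1]
    exact Kcs_maps hab hp (hconv a ⟨le_refl a, hab⟩)
  · show p.1 + p.2 * (1 - t) * w + p.2 * t * b ∈ Set.Icc a b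
    have h1 : p.1 + p.2 * (1 - t) * w + p.2 * t * b
        = p.1 + p.2 * ((1 - t) * w + t * b) := by ring
    rw [h1]
    exact Kcs_maps hab hp (hconv b ⟨hab, le_refl b⟩)

lemma Kcs_compact (a b : ℝ) : IsCompact (Kcs a b) := by
  have hclosed : IsClosed (Kcs a b) := by
    apply IsClosed.inter
    · exact isClosed_Icc.preimage continuous_snd
    apply IsClosed.inter
    · exact isClosed_Icc.preimage (continuous_fst.add (continuous_snd.mul continuous_const))
    · exact isClosed_Icc.preimage (continuous_fst.add (continuous_snd.mul continuous_const))
  apply IsCompact.of_isClosed_subset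
    ((isCompact_Icc (a := a - max a 0) (b := b - min a 0)).prod
      (isCompact_Icc (a := (0:ℝ)) (b := 1)))
    hclosed
  rintro ⟨c, s⟩ ⟨⟨hs0, hs1⟩, ⟨ha1, ha2⟩, _⟩
  constructor
  · constructor
    · rcases le_total 0 a with h | h
      · simp only [max_eq_left h]
        nlinarith
      · simp only [max_eq_right h]
        nlinarith
    · rcases le_total 0 a with h | h
      · simp only [min_eq_right h]
        nlinarith
      · simp only [min_eq_left h]
        nlinarith
  · exact ⟨hs0, hs1⟩

/-- The compact parameter domain for `Vd` with `j` nodes. -/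
def Dset (a b : ℝ) (j : ℕ) : Set ((ℝ × ℝ) × (Fin j → ℝ) × ℝ) :=
  Kcs a b ×ˢ ((Set.univ.pi fun _ : Fin j => Set.Icc a b) ×ˢ Set.Icc a b)

lemma Dset_compact (a b : ℝ) (j : ℕ) : IsCompact (Dset a b j) :=
  (Kcs_compact a b).prod ((isCompact_univ_pi fun _ => isCompact_Icc).prod isCompact_Icc)

variable {n : ℕ} {a b : ℝ} {fd : ℕ → ℝ → ℝ}

/-- Joint continuity of `Vd` in all parameters on the admissible domain. -/
lemma CVd (hD : IsDn n a b fd) (hab : a < b) :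
    ∀ (j m : ℕ), m + j ≤ n - 1 →
    ContinuousOn (fun q : (ℝ × ℝ) × (Fin j → ℝ) × ℝ =>
      Vd fd m q.1.1 q.1.2 (List.ofFn q.2.1) q.2.2) (Dset a b j) := by
  intro j
  induction j with
  | zero =>
    intro m hm
    have heq : (fun q : (ℝ × ℝ) × (Fin 0 → ℝ) × ℝ =>
        Vd fd m q.1.1 q.1.2 (List.ofFn q.2.1) q.2.2)
        = fun q => fd m (q.1.1 + q.1.2 * q.2.2) := by
      funext q
      rw [List.ofFn_zero, Vd_nil]
    rw [heq]
    apply (hD.cont (by omega : m ≤ n - 1)).comp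
      (Continuous.continuousOn (by fun_prop))
    rintro q ⟨hq1, _, hq3⟩
    exact Kcs_maps (le_of_lt hab) hq1 hq3
  | succ j ih =>
    intro m hm
    have heq : (fun q : (ℝ × ℝ) × (Fin (j+1) → ℝ) × ℝ =>
        Vd fd m q.1.1 q.1.2 (List.ofFn q.2.1) q.2.2)
        = fun q => ∫ t in (0:ℝ)..1, q.1.2 * Vd fd (m + 1)
            (q.1.1 + q.1.2 * (1 - t) * (q.2.1 0)) (q.1.2 * t)
            (List.ofFn fun i : Fin j => q.2.1 i.succ) q.2.2 := by
      funext q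
      rw [List.ofFn_succ, Vd_cons]
    rw [heq]
    apply contOn_param_integral (Dset_compact a b (j+1))
    have hΦ : Continuous (fun tq : ℝ × ((ℝ × ℝ) × (Fin (j+1) → ℝ) × ℝ) =>
        (((tq.2.1.1 + tq.2.1.2 * (1 - tq.1) * (tq.2.2.1 0), tq.2.1.2 * tq.1),
          ((fun i : Fin j => tq.2.2.1 i.succ), tq.2.2.2)) :
          (ℝ × ℝ) × (Fin j → ℝ) × ℝ)) := by
      refine Continuous.prodMk ?_ (Continuous.prodMk ?_ ?_)
      · refine Continuous.prodMk ?_ ?_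
        · have h0 : Continuous (fun tq : ℝ × ((ℝ × ℝ) × (Fin (j+1) → ℝ) × ℝ)
              => tq.2.2.1 0) := (continuous_apply 0).comp (continuous_fst.comp
                (continuous_snd.comp continuous_snd))
          fun_prop
        · fun_prop
      · exact continuous_pi fun i => (continuous_apply i.succ).comp
          (continuous_fst.comp (continuous_snd.comp continuous_snd))
      · fun_prop
    have hmaps : Set.MapsTo (fun tq : ℝ × ((ℝ × ℝ) × (Fin (j+1) → ℝ) × ℝ) =>
        (((tq.2.1.1 + tq.2.1.2 * (1 - tq.1) * (tq.2.2.1 0), tq.2.1.2 * tq.1),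
          ((fun i : Fin j => tq.2.2.1 i.succ), tq.2.2.2)) :
          (ℝ × ℝ) × (Fin j → ℝ) × ℝ))
        (Set.Icc (0:ℝ) 1 ×ˢ Dset a b (j+1)) (Dset a b j) := by
      rintro ⟨t, q⟩ ⟨ht, hq1, hq2, hq3⟩
      refine ⟨Kcs_step (le_of_lt hab) hq1 ht (hq2 0 (Set.mem_univ 0)), ?_, hq3⟩
      intro i _
      exact hq2 i.succ (Set.mem_univ _)
    have hVcont := ih (m + 1) (by omega)
    have hmul : ContinuousOn (fun tq : ℝ × ((ℝ × ℝ) × (Fin (j+1) → ℝ) × ℝ) =>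
        tq.2.1.2 * Vd fd (m + 1)
          (tq.2.1.1 + tq.2.1.2 * (1 - tq.1) * (tq.2.2.1 0)) (tq.2.1.2 * tq.1)
          (List.ofFn fun i : Fin j => tq.2.2.1 i.succ) tq.2.2.2)
        (Set.Icc (0:ℝ) 1 ×ˢ Dset a b (j+1)) := by
      apply ContinuousOn.mul
      · fun_prop
      · exact hVcont.comp hΦ.continuousOn hmaps
    exact hmul

end VD


section VDRec

variable {n : ℕ} {a b : ℝ} {fd : ℕ → ℝ → ℝ}

/-- Continuity of `Vd` in the last node, for a fixed list of nodes. -/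
lemma CVd_param (hD : IsDn n a b fd) (hab : a < b) {m : ℕ} {ws : List ℝ}
    (hm : m + ws.length ≤ n - 1) (hws : ∀ u ∈ ws, u ∈ Set.Icc a b) :
    ContinuousOn (fun q : (ℝ × ℝ) × ℝ => Vd fd m q.1.1 q.1.2 ws q.2)
      (Kcs a b ×ˢ Set.Icc a b) := by
  have hofn : List.ofFn ws.get = ws := List.ofFn_get ws
  have hcont := CVd hD hab ws.length m (by omega)
  have hcomp : Continuous (fun q : (ℝ × ℝ) × ℝ =>
      ((q.1, (ws.get, q.2)) : (ℝ × ℝ) × (Fin ws.length → ℝ) × ℝ)) := by fun_prop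
  have hmaps : Set.MapsTo (fun q : (ℝ × ℝ) × ℝ =>
      ((q.1, (ws.get, q.2)) : (ℝ × ℝ) × (Fin ws.length → ℝ) × ℝ))
      (Kcs a b ×ˢ Set.Icc a b) (Dset a b ws.length) := by
    rintro ⟨p, x⟩ ⟨hp, hx⟩
    exact ⟨hp, fun i _ => hws _ (List.get_mem ws i), hx⟩
  have hcc := hcont.comp hcomp.continuousOn hmaps
  apply hcc.congr
  intro q hq
  simp only [Function.comp_apply]
  rw [hofn]

/-- The divided-difference recurrence for `Vd`: appending a node `z`. -/
lemma Vd_rec (hD : IsDn n a b fd) (hn : 1 ≤ n) (hab : a < b) :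
    ∀ (ws : List ℝ) (m : ℕ) (c s : ℝ), (c, s) ∈ Kcs a b →
    (∀ u ∈ ws, u ∈ Set.Icc a b) → ∀ z ∈ Set.Icc a b, ∀ x ∈ Set.Icc a b,
    m + ws.length + 1 ≤ n - 1 →
    Vd fd m c s (ws ++ [z]) x * (x - z) = Vd fd m c s ws x - Vd fd m c s ws z := by
  intro ws
  induction ws with
  | nil =>
    intro m c s hcs hws z hz x hx hmn
    rcases eq_or_ne x z with hxz | hxz
    · subst hxz; simp
    rcases eq_or_lt_of_le hcs.1.1 with hs0 | hs0
    · -- s = 0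
      have hs0' : s = 0 := hs0.symm
      subst hs0'
      simp only [List.nil_append, Vd_cons, Vd_nil, zero_mul]
      simp
    -- s > 0 : genuine FTC
    have hpt : ∀ t : ℝ, t ∈ Set.Icc (0:ℝ) 1 → c + s * z + s * t * (x - z) ∈ Set.Icc a b := by
      intro t ht
      have h1 : c + s * z + s * t * (x - z) = c + s * ((1 - t) * z + t * x) := by ring
      rw [h1]
      apply Kcs_maps (le_of_lt hab) hcs
      constructor
      · nlinarith [hz.1, hz.2, hx.1, hx.2, ht.1, ht.2]
      · nlinarith [hz.1, hz.2, hx.1, hx.2, ht.1, ht.2]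
    have hptIoo : ∀ t : ℝ, t ∈ Set.Ioo (0:ℝ) 1 → c + s * z + s * t * (x - z) ∈ Set.Ioo a b := by
      intro t ht
      have h0 : c + s * z ∈ Set.Icc a b := by
        have := Kcs_maps (le_of_lt hab) hcs hz
        simpa using this
      have h1 : c + s * x ∈ Set.Icc a b := by
        have := Kcs_maps (le_of_lt hab) hcs hx
        simpa using this
      rcases lt_or_gt_of_ne hxz with hlt | hgt
      · -- x < z : decreasing path
        constructor
        · have : c + s * z + s * 1 * (x - z) = c + s * x := by ring
          nlinarith [h1.1, ht.2, mul_pos hs0 (sub_pos.2 hlt)]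
        · nlinarith [h0.2, ht.1, mul_pos hs0 (sub_pos.2 hlt)]
      · constructor
        · nlinarith [h0.1, ht.1, mul_pos hs0 (sub_pos.2 hgt)]
        · nlinarith [h1.2, ht.2, mul_pos hs0 (sub_pos.2 hgt)]
    have hm1 : m + 1 ≤ n - 1 := by simpa using hmn
    set g : ℝ → ℝ := fun t => fd m (c + s * z + s * t * (x - z)) with hg
    set g' : ℝ → ℝ := fun t => s * (x - z) * fd (m + 1) (c + s * z + s * t * (x - z)) with hg'
    have hgcont : ContinuousOn g (Set.Icc (0:ℝ) 1) := by
      apply (hD.cont (by omega : m ≤ n - 1)).comp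
      · fun_prop
      · intro t ht
        exact hpt t ht
    have hg'cont : ContinuousOn g' (Set.Icc (0:ℝ) 1) := by
      apply ContinuousOn.mul continuousOn_const
      apply (hD.cont (by omega : m + 1 ≤ n - 1)).comp
      · fun_prop
      · intro t ht
        exact hpt t ht
    have hderiv : ∀ t ∈ Set.Ioo (0:ℝ) 1, HasDerivWithinAt g (g' t) (Set.Ioi t) t := by
      intro t ht
      have hfda := hD.hda hn (by omega : m ≤ n - 1) (hptIoo t ht)
      have haff : HasDerivAt (fun u : ℝ => c + s * z + s * u * (x - z)) (s * (x - z)) t := by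
        have h1 : (fun u : ℝ => c + s * z + s * u * (x - z))
            = fun u : ℝ => (s * (x - z)) * u + (c + s * z) := by funext u; ring
        rw [h1]
        simpa using ((hasDerivAt_id t).const_mul (s * (x - z))).add_const (c + s * z)
      have := hfda.comp t haff
      have h2 : g' t = fd (m + 1) (c + s * z + s * t * (x - z)) * (s * (x - z)) := by
        rw [hg']; ring
      rw [h2]
      exact this.hasDerivWithinAt
    have hint : IntervalIntegrable g' MeasureTheory.volume 0 1 := by
      apply ContinuousOn.intervalIntegrable
      rw [Set.uIcc_of_le (by norm_num : (0:ℝ) ≤ 1)]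
      exact hg'cont
    have hftc : ∫ t in (0:ℝ)..1, g' t = g 1 - g 0 :=
      intervalIntegral.integral_eq_sub_of_hasDeriv_right_of_le (by norm_num)
        hgcont hderiv hint
    have hg1 : g 1 = fd m (c + s * x) := by rw [hg]; norm_num; ring_nf
    have hg0 : g 0 = fd m (c + s * z) := by rw [hg]; norm_num
    -- now rewrite the left side
    simp only [List.nil_append, Vd_cons, Vd_nil]
    rw [← intervalIntegral.integral_mul_const]
    have heqint : ∫ t in (0:ℝ)..1,
        (s * fd (m + 1) (c + s * (1 - t) * z + s * t * x)) * (x - z)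
        = ∫ t in (0:ℝ)..1, g' t := by
      apply intervalIntegral.integral_congr
      intro t _
      have harg : c + s * (1 - t) * z + s * t * x = c + s * z + s * t * (x - z) := by ring
      rw [hg']
      simp only
      rw [harg]
      ring
    rw [heqint, hftc, hg1, hg0]
  | cons w ws ih =>
    intro m c s hcs hws z hz x hx hmn
    have hw : w ∈ Set.Icc a b := hws w List.mem_cons_self
    have hws' : ∀ u ∈ ws, u ∈ Set.Icc a b := fun u hu => hws u (List.mem_cons_of_mem w hu)
    have hwsz : ∀ u ∈ ws ++ [z], u ∈ Set.Icc a b := by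
      intro u hu
      rcases List.mem_append.1 hu with h | h
      · exact hws' u h
      · rw [List.mem_singleton.1 h]; exact hz
    have hccons : (w :: ws) ++ [z] = w :: (ws ++ [z]) := rfl
    rw [hccons, Vd_cons, Vd_cons, Vd_cons]
    rw [← intervalIntegral.integral_mul_const]
    have hlen : (m + 1) + ws.length + 1 ≤ n - 1 := by
      simp only [List.length_cons] at hmn
      omega
    have hKt : ∀ t ∈ Set.Icc (0:ℝ) 1, (c + s * (1 - t) * w, s * t) ∈ Kcs a b := by
      intro t ht
      exact Kcs_step (le_of_lt hab) hcs ht hw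
    have heqint : ∫ t in (0:ℝ)..1,
        (s * Vd fd (m + 1) (c + s * (1 - t) * w) (s * t) (ws ++ [z]) x) * (x - z)
        = ∫ t in (0:ℝ)..1,
        (s * Vd fd (m + 1) (c + s * (1 - t) * w) (s * t) ws x
          - s * Vd fd (m + 1) (c + s * (1 - t) * w) (s * t) ws z) := by
      apply intervalIntegral.integral_congr
      intro t ht
      rw [Set.uIcc_of_le (by norm_num : (0:ℝ) ≤ 1)] at ht
      have := ih (m + 1) (c + s * (1 - t) * w) (s * t) (hKt t ht) hws' z hz x hx hlen
      simp only
      calc (s * Vd fd (m + 1) (c + s * (1 - t) * w) (s * t) (ws ++ [z]) x) * (x - z)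
          = s * (Vd fd (m + 1) (c + s * (1 - t) * w) (s * t) (ws ++ [z]) x * (x - z)) := by
            ring
        _ = s * (Vd fd (m + 1) (c + s * (1 - t) * w) (s * t) ws x
              - Vd fd (m + 1) (c + s * (1 - t) * w) (s * t) ws z) := by rw [this]
        _ = _ := by ring
    rw [heqint]
    have hcint : ∀ y ∈ Set.Icc a b, IntervalIntegrable
        (fun t => s * Vd fd (m + 1) (c + s * (1 - t) * w) (s * t) ws y)
        MeasureTheory.volume 0 1 := by
      intro y hy
      apply ContinuousOn.intervalIntegrable
      rw [Set.uIcc_of_le (by norm_num : (0:ℝ) ≤ 1)]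
      apply ContinuousOn.mul continuousOn_const
      have hparam := CVd_param hD hab (m := m + 1) (ws := ws) (by omega) hws'
      apply hparam.comp (f := fun t : ℝ => (((c + s * (1 - t) * w, s * t), y) : (ℝ × ℝ) × ℝ))
      · fun_prop
      · intro t ht
        exact ⟨hKt t ht, hy⟩
    rw [intervalIntegral.integral_sub (hcint x hx) (hcint z hz)]

end VDRec


section Slope

variable {n : ℕ} {a b : ℝ} {fd : ℕ → ℝ → ℝ}

/-- On distinct nodes, `Vd` equals the divided difference. -/
lemma Vd_eq_dd (hD : IsDn n a b fd) (hn : 1 ≤ n) (hab : a < b) :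
    ∀ (ws : List ℝ), ws.length ≤ n - 1 → ws.Nodup → (∀ u ∈ ws, u ∈ Set.Icc a b) →
    ∀ x ∈ Set.Icc a b, x ∉ ws →
    Vd fd 0 0 1 ws x = dd (fd 0) (insert x ws.toFinset) := by
  intro ws
  induction ws using List.reverseRecOn with
  | nil =>
    intro _ _ _ x hx _
    simp [dd_singleton]
  | append_singleton ws z ih =>
    intro hlen hnd hmem x hx hxnot
    have hlen' : ws.length ≤ n - 1 := by
      rw [List.length_append, List.length_singleton] at hlen
      omega
    have hndws : ws.Nodup := hnd.of_append_left
    have hznot : z ∉ ws := by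
      have hdisj := List.disjoint_of_nodup_append hnd
      intro hzin
      exact hdisj hzin (List.mem_singleton_self z)
    have hz : z ∈ Set.Icc a b := hmem z (by simp)
    have hmem' : ∀ u ∈ ws, u ∈ Set.Icc a b := fun u hu => hmem u (by simp [hu])
    have hxws : x ∉ ws := fun h => hxnot (by simp [h])
    have hxz : x ≠ z := fun h => hxnot (by simp [h])
    have hrec := Vd_rec hD hn hab ws 0 0 1 (Kcs_base a b (le_of_lt hab)) hmem' z hz x hx
      (by rw [List.length_append, List.length_singleton] at hlen; omega)
    rw [ih hlen' hndws hmem' x hx hxws, ih hlen' hndws hmem' z hz hznot] at hrec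
    have hxT : x ∉ ws.toFinset := fun h => hxws (List.mem_toFinset.1 h)
    have hzT : z ∉ ws.toFinset := fun h => hznot (List.mem_toFinset.1 h)
    have hSdist : ∀ z' ∈ ws.toFinset, ∀ w ∈ (ws.toFinset).erase z', z' - w ≠ 0 := by
      intro z' _ w hw
      exact sub_ne_zero.2 (fun h => (Finset.mem_erase.1 hw).1 (by rw [h]))
    have hddrec := dd_rec (fd 0) ws.toFinset hxT hzT hxz hSdist
    rw [hddrec] at hrec
    have hcancel : Vd fd 0 0 1 (ws ++ [z]) x
        = dd (fd 0) (insert x (insert z ws.toFinset)) := by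
      have h2 : Vd fd 0 0 1 (ws ++ [z]) x * (x - z)
          = dd (fd 0) (insert x (insert z ws.toFinset)) * (x - z) := by
        rw [hrec]; ring
      exact mul_right_cancel₀ (sub_ne_zero.2 hxz) h2
    rw [hcancel]
    have htf : (ws ++ [z]).toFinset = insert z ws.toFinset := by
      rw [List.toFinset_append]
      simp only [List.toFinset_cons, List.toFinset_nil, LawfulSingleton.insert_empty_eq]
      rw [Finset.union_comm, ← Finset.insert_eq]
    rw [htf]

/-- The key slope inequality at the bottom level. -/
lemma slope_ge (hD : IsDn n a b fd) (hn : 1 ≤ n) (hab : a < b)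
    (hpos : ∀ t ∈ Set.Ioo a b, (n ! : ℝ) ≤ fd n t)
    (ws : List ℝ) (hlen : ws.length = n - 1) (hws : ∀ u ∈ ws, u ∈ Set.Icc a b)
    {x y : ℝ} (hx : x ∈ Set.Icc a b) (hy : y ∈ Set.Icc a b) (hxy : y < x) :
    x - y ≤ Vd fd 0 0 1 ws x - Vd fd 0 0 1 ws y := by
  classical
  set j := ws.length with hj
  set w : Fin j → ℝ := ws.get with hw
  have hwmem : ∀ i, w i ∈ Set.Icc a b := fun i => hws _ (List.get_mem ws i)
  -- the comparison function
  set Ψ : (Fin j → ℝ) → ℝ := fun v =>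
    Vd fd 0 0 1 (List.ofFn v) x - Vd fd 0 0 1 (List.ofFn v) y with hΨdef
  have hjn : (0:ℕ) + j ≤ n - 1 := by omega
  have hΨc : ContinuousOn Ψ (Set.univ.pi fun _ : Fin j => Set.Icc a b) := by
    have hbase := CVd hD hab j 0 hjn
    have h1 : ContinuousOn (fun v : Fin j → ℝ => Vd fd 0 0 1 (List.ofFn v) x)
        (Set.univ.pi fun _ : Fin j => Set.Icc a b) := by
      apply hbase.comp (f := fun v : Fin j → ℝ =>
        ((((0:ℝ),(1:ℝ)), (v, x)) : (ℝ × ℝ) × (Fin j → ℝ) × ℝ))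
      · fun_prop
      · intro v hv
        exact ⟨Kcs_base a b (le_of_lt hab), hv, hx⟩
    have h2 : ContinuousOn (fun v : Fin j → ℝ => Vd fd 0 0 1 (List.ofFn v) y)
        (Set.univ.pi fun _ : Fin j => Set.Icc a b) := by
      apply hbase.comp (f := fun v : Fin j → ℝ =>
        ((((0:ℝ),(1:ℝ)), (v, y)) : (ℝ × ℝ) × (Fin j → ℝ) × ℝ))
      · fun_prop
      · intro v hv
        exact ⟨Kcs_base a b (le_of_lt hab), hv, hy⟩
    exact h1.sub h2
  -- perturbed vectors
  have hex : ∀ k : ℕ, ∃ v : Fin j → ℝ, (∀ i, v i ∈ Set.Icc a b) ∧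
      (∀ i, |v i - w i| < 1/(k+1)) ∧ Function.Injective v ∧ (∀ i, v i ∉ ({x, y} : Finset ℝ)) := by
    intro k
    apply exists_perturb hab j w hwmem
    positivity
  choose v hv1 hv2 hv3 hv4 using hex
  -- each perturbed vector gives the inequality
  have hineq : ∀ k, x - y ≤ Ψ (v k) := by
    intro k
    set L : List ℝ := List.ofFn (v k) with hL
    have hLnd : L.Nodup := List.nodup_ofFn.2 (hv3 k)
    have hLlen : L.length = j := by rw [hL, List.length_ofFn]
    have hLmem : ∀ u ∈ L, u ∈ Set.Icc a b := by
      intro u hu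
      obtain ⟨i, hi⟩ := List.mem_ofFn.1 (hL ▸ hu)
      exact hi ▸ hv1 k i
    have hxL : x ∉ L := by
      intro hmem
      obtain ⟨i, hi⟩ := List.mem_ofFn.1 (hL ▸ hmem)
      exact hv4 k i (by rw [hi]; simp)
    have hyL : y ∉ L := by
      intro hmem
      obtain ⟨i, hi⟩ := List.mem_ofFn.1 (hL ▸ hmem)
      exact hv4 k i (by rw [hi]; simp)
    have hVx := Vd_eq_dd hD hn hab L (by omega) hLnd hLmem x hx hxL
    have hVy := Vd_eq_dd hD hn hab L (by omega) hLnd hLmem y hy hyL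
    set T := L.toFinset with hT
    have hxT : x ∉ T := fun h => hxL (List.mem_toFinset.1 h)
    have hyT : y ∉ T := fun h => hyL (List.mem_toFinset.1 h)
    have hxyne : x ≠ y := ne_of_gt hxy
    have hSdist : ∀ z' ∈ T, ∀ u ∈ T.erase z', z' - u ≠ 0 := by
      intro z' _ u hu
      exact sub_ne_zero.2 (fun h => (Finset.mem_erase.1 hu).1 (by rw [h]))
    have hddrec := dd_rec (fd 0) T hxT hyT hxyne hSdist
    have hTcard : T.card = j := by
      rw [hT, List.toFinset_card_of_nodup hLnd, hLlen]
    have hcard : (insert x (insert y T)).card = n + 1 := by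
      rw [Finset.card_insert_of_notMem, Finset.card_insert_of_notMem hyT, hTcard]
      · omega
      · simp only [Finset.mem_insert]
        push_neg
        exact ⟨hxyne, hxT⟩
    have hsub : ↑(insert x (insert y T)) ⊆ Set.Icc a b := by
      intro u hu
      simp only [Finset.coe_insert, Set.mem_insert_iff] at hu
      rcases hu with rfl | rfl | hu
      · exact hx
      · exact hy
      · exact hLmem u (List.mem_toFinset.1 hu)
    have hdd1 := dd_ge_one hD hn hab hpos (insert x (insert y T)) hcard hsub
    rw [hΨdef]
    simp only
    rw [← hL, hVx, hVy, hddrec]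
    nlinarith [hdd1, sub_pos.2 hxy]
  -- pass to the limit
  have htend : Filter.Tendsto v Filter.atTop (nhds w) := by
    rw [tendsto_pi_nhds]
    intro i
    rw [tendsto_iff_dist_tendsto_zero]
    apply squeeze_zero (fun k => dist_nonneg)
      (fun k => le_of_lt (by rw [Real.dist_eq]; exact hv2 k i))
    exact tendsto_one_div_add_atTop_nhds_zero_nat
  have htendW : Filter.Tendsto v Filter.atTop
      (nhdsWithin w (Set.univ.pi fun _ : Fin j => Set.Icc a b)) := by
    rw [tendsto_nhdsWithin_iff]
    exact ⟨htend, Filter.Eventually.of_forall (fun k => fun i _ => hv1 k i)⟩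
  have hwmem' : w ∈ Set.univ.pi fun _ : Fin j => Set.Icc a b := fun i _ => hwmem i
  have hΨtend : Filter.Tendsto (fun k => Ψ (v k)) Filter.atTop (nhds (Ψ w)) :=
    (hΨc w hwmem').tendsto.comp htendW
  have hfinal : x - y ≤ Ψ w :=
    ge_of_tendsto hΨtend (Filter.Eventually.of_forall hineq)
  rw [hΨdef] at hfinal
  simp only at hfinal
  rw [hw] at hfinal
  rw [List.ofFn_get] at hfinal
  exact hfinal

end Slope


section Desc

variable {n : ℕ} {a b : ℝ} {fd : ℕ → ℝ → ℝ}

lemma Vd_contOn_x (hD : IsDn n a b fd) (hab : a < b) {ws : List ℝ}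
    (hm : ws.length ≤ n - 1) (hws : ∀ u ∈ ws, u ∈ Set.Icc a b) :
    ContinuousOn (fun x => Vd fd 0 0 1 ws x) (Set.Icc a b) := by
  have hparam := CVd_param hD hab (m := 0) (ws := ws) (by omega) hws
  apply hparam.comp (f := fun x : ℝ => ((((0:ℝ),(1:ℝ)), x) : (ℝ × ℝ) × ℝ))
  · fun_prop
  · intro x hx
    exact ⟨Kcs_base a b (le_of_lt hab), hx⟩

lemma desc (hD : IsDn n a b fd) (hn : 1 ≤ n) (hab : a < b)
    (hpos : ∀ t ∈ Set.Ioo a b, (n ! : ℝ) ≤ fd n t) :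
    ∀ (d : ℕ), d ≤ n - 1 → ∀ (ws : List ℝ), ws.length = n - 1 - d →
    (∀ u ∈ ws, u ∈ Set.Icc a b) →
    ∃ ζs : List ℝ, ζs.length = d + 1 ∧ (∀ z ∈ ζs, z ∈ Set.Icc a b) ∧
      ∀ x ∈ Set.Icc a b, (ζs.map (fun z => |x - z|)).prod ≤ |Vd fd 0 0 1 ws x| := by
  intro d
  induction d with
  | zero =>
    intro _ ws hlen hws
    set phF : ℝ → ℝ := fun x => Vd fd 0 0 1 ws x with hphFdef
    have hphF : ContinuousOn phF (Set.Icc a b) := Vd_contOn_x hD hab (by omega) hws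
    obtain ⟨ζ, hζ, hminOn⟩ := isCompact_Icc.exists_isMinOn (Set.nonempty_Icc.2 (le_of_lt hab))
      hphF.abs
    have hmin : ∀ y ∈ Set.Icc a b, |phF ζ| ≤ |phF y| := fun y hy => hminOn hy
    have hshift := abs_sub_min_le hphF (le_of_lt hab) hζ hmin
    refine ⟨[ζ], rfl, by simpa using hζ, ?_⟩
    intro x hx
    have hslope : |x - ζ| ≤ |phF x - phF ζ| := by
      rcases lt_trichotomy x ζ with h | h | h
      · have := slope_ge hD hn hab hpos ws (by omega) hws hζ hx h
        rw [abs_of_neg (sub_neg.2 h)]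
        rw [abs_sub_comm]
        rw [abs_of_nonneg (by linarith : (0:ℝ) ≤ phF ζ - phF x)]
        linarith
      · simp [h]
      · have := slope_ge hD hn hab hpos ws (by omega) hws hx hζ h
        rw [abs_of_pos (sub_pos.2 h), abs_of_nonneg (by linarith : (0:ℝ) ≤ phF x - phF ζ)]
        linarith
    simp only [List.map_cons, List.map_nil, List.prod_cons, List.prod_nil, mul_one]
    exact le_trans hslope (hshift x hx)
  | succ d ih =>
    intro hd ws hlen hws
    set phF : ℝ → ℝ := fun x => Vd fd 0 0 1 ws x with hphFdef
    have hphF : ContinuousOn phF (Set.Icc a b) := Vd_contOn_x hD hab (by omega) hws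
    obtain ⟨ζ, hζ, hminOn⟩ := isCompact_Icc.exists_isMinOn (Set.nonempty_Icc.2 (le_of_lt hab))
      hphF.abs
    have hmin : ∀ y ∈ Set.Icc a b, |phF ζ| ≤ |phF y| := fun y hy => hminOn hy
    have hshift := abs_sub_min_le hphF (le_of_lt hab) hζ hmin
    have hwsζ : ∀ u ∈ ws ++ [ζ], u ∈ Set.Icc a b := by
      intro u hu
      rcases List.mem_append.1 hu with h | h
      · exact hws u h
      · rw [List.mem_singleton.1 h]; exact hζ
    obtain ⟨ζs', hl', hmem', hprod'⟩ := ih (by omega) (ws ++ [ζ])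
      (by rw [List.length_append, List.length_singleton]; omega) hwsζ
    refine ⟨ζ :: ζs', by simp [hl'], ?_, ?_⟩
    · intro z hz
      rcases List.mem_cons.1 hz with rfl | hz'
      · exact hζ
      · exact hmem' z hz'
    intro x hx
    have hrec := Vd_rec hD hn hab ws 0 0 1 (Kcs_base a b (le_of_lt hab)) hws ζ hζ x hx
      (by omega)
    have h1 : (((ζ :: ζs').map (fun z => |x - z|)).prod)
        = |x - ζ| * ((ζs'.map (fun z => |x - z|)).prod) := by
      simp [List.prod_cons]
    rw [h1]
    have hnn : (0:ℝ) ≤ (ζs'.map (fun z => |x - z|)).prod := by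
      apply List.prod_nonneg
      intro u hu
      obtain ⟨z, _, rfl⟩ := List.mem_map.1 hu
      exact abs_nonneg _
    calc |x - ζ| * ((ζs'.map (fun z => |x - z|)).prod)
        ≤ |x - ζ| * |Vd fd 0 0 1 (ws ++ [ζ]) x| := by
          exact mul_le_mul_of_nonneg_left (hprod' x hx) (abs_nonneg _)
      _ = |Vd fd 0 0 1 (ws ++ [ζ]) x * (x - ζ)| := by
          rw [abs_mul]; ring
      _ = |phF x - phF ζ| := by rw [hrec]
      _ ≤ |phF x| := hshift x hx

/-- Pointwise domination by a monic "polynomial" (in factored form), one-sided version. -/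
lemma domination_pos (hD : IsDn n a b fd) (hn : 1 ≤ n) (hab : a < b)
    (hpos : ∀ t ∈ Set.Ioo a b, (n ! : ℝ) ≤ fd n t) :
    ∃ ζs : List ℝ, ζs.length = n ∧ (∀ z ∈ ζs, z ∈ Set.Icc a b) ∧
      ∀ x ∈ Set.Icc a b, (ζs.map (fun z => |x - z|)).prod ≤ |fd 0 x| := by
  obtain ⟨ζs, h1, h2, h3⟩ := desc hD hn hab hpos (n - 1) le_rfl [] (by simp) (by simp)
  refine ⟨ζs, by omega, h2, ?_⟩
  intro x hx
  have := h3 x hx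
  simpa using this

/-- Pointwise domination by a monic "polynomial" (in factored form). -/
lemma domination (hD : IsDn n a b fd) (hn : 1 ≤ n) (hab : a < b)
    (hm : ∀ t ∈ Set.Ioo a b, (n ! : ℝ) ≤ |fd n t|) :
    ∃ ζs : List ℝ, ζs.length = n ∧ (∀ z ∈ ζs, z ∈ Set.Icc a b) ∧
      ∀ x ∈ Set.Icc a b, (ζs.map (fun z => |x - z|)).prod ≤ |fd 0 x| := by
  rcases sign_dichotomy hD hn hab hm with hp | hneg
  · exact domination_pos hD hn hab hp
  · set fd' : ℕ → ℝ → ℝ := fun k x => -(fd k x) with hfd'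
    have hD' : IsDn n a b fd' := by
      refine ⟨?_, ?_, ?_⟩
      · intro k hk x hx
        exact (hD.1 k hk x hx).neg
      · exact hD.2.1.neg
      · intro x hx
        exact (hD.2.2 x hx).neg
    have hp' : ∀ t ∈ Set.Ioo a b, (n ! : ℝ) ≤ fd' n t := by
      intro t ht
      have := hneg t ht
      simp only [hfd']
      linarith
    obtain ⟨ζs, h1, h2, h3⟩ := domination_pos hD' hn hab hp'
    refine ⟨ζs, h1, h2, ?_⟩
    intro x hx
    have := h3 x hx
    simp only [hfd', abs_neg] at this
    exact this

end Desc


section Assembly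

lemma exists_monic_poly (ζs : List ℝ) :
    ∃ Q : Polynomial ℝ, Q.Monic ∧ Q.natDegree = ζs.length ∧
      ∀ x : ℝ, |Q.eval x| = (ζs.map (fun z => |x - z|)).prod := by
  induction ζs with
  | nil =>
    exact ⟨1, Polynomial.monic_one, Polynomial.natDegree_one, by simp⟩
  | cons z ζs ih =>
    obtain ⟨Q, hm, hd, he⟩ := ih
    refine ⟨(Polynomial.X - Polynomial.C z) * Q, (Polynomial.monic_X_sub_C z).mul hm, ?_, ?_⟩
    · rw [(Polynomial.monic_X_sub_C z).natDegree_mul hm, Polynomial.natDegree_X_sub_C, hd]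
      rw [List.length_cons]
      omega
    · intro x
      rw [Polynomial.eval_mul, abs_mul, Polynomial.eval_sub, Polynomial.eval_X,
        Polynomial.eval_C, he]
      simp

lemma pnorm_nonneg (p : ℝ≥0∞) {a b : ℝ} (hab : a ≤ b) (f : ℝ → ℝ) :
    0 ≤ pnorm p a b f := by
  unfold pnorm
  split
  · apply Real.sSup_nonneg
    rintro y ⟨x, _, rfl⟩
    exact abs_nonneg _
  · unfold _root_.Lp
    apply Real.rpow_nonneg
    apply intervalIntegral.integral_nonneg hab
    intro u _
    positivity

lemma pnorm_mono (p : ℝ≥0∞) (hp : 0 < p) {a b : ℝ} (hab : a ≤ b) {f g : ℝ → ℝ}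
    (hf : ContinuousOn f (Set.Icc a b)) (hg : ContinuousOn g (Set.Icc a b))
    (h : ∀ x ∈ Set.Icc a b, |f x| ≤ |g x|) : pnorm p a b f ≤ pnorm p a b g := by
  unfold pnorm
  split
  · -- sup norm
    unfold Lsup
    apply Real.sSup_le
    · rintro y ⟨x, hx, rfl⟩
      refine le_trans (h x hx) ?_
      apply le_csSup
      · exact (isCompact_Icc.image_of_continuousOn hg.abs).bddAbove
      · exact ⟨x, hx, rfl⟩
    · apply Real.sSup_nonneg
      rintro y ⟨x, _, rfl⟩
      exact abs_nonneg _
  · -- Lp norm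
    rename_i hptop
    have hpr : 0 < p.toReal := ENNReal.toReal_pos (ne_of_gt hp) hptop
    unfold _root_.Lp
    have hint : ∀ {u : ℝ → ℝ}, ContinuousOn u (Set.Icc a b) →
        IntervalIntegrable (fun t => |u t| ^ p.toReal) MeasureTheory.volume a b := by
      intro u hu
      apply ContinuousOn.intervalIntegrable
      rw [Set.uIcc_of_le hab]
      apply ContinuousOn.rpow_const hu.abs
      intro x _
      exact Or.inr (le_of_lt hpr)
    apply Real.rpow_le_rpow
    · apply intervalIntegral.integral_nonneg hab
      intro u _
      positivity
    · apply intervalIntegral.integral_mono_on hab (hint hf) (hint hg)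
      intro x hx
      exact Real.rpow_le_rpow (abs_nonneg _) (h x hx) (le_of_lt hpr)
    · positivity

lemma poly_fd_eval (n : ℕ) (hn : 1 ≤ n) (Q : Polynomial ℝ) (hQ : Q.Monic)
    (hd : Q.natDegree = n) (x : ℝ) : (Polynomial.derivative^[n] Q).eval x = (n ! : ℝ) := by
  have hnd : (Polynomial.derivative^[n] Q).natDegree ≤ 0 := by
    have := Polynomial.natDegree_iterate_derivative Q n
    omega
  rw [Polynomial.eq_C_of_natDegree_le_zero hnd]
  rw [Polynomial.eval_C]
  rw [Polynomial.coeff_iterate_derivative]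
  simp only [Nat.zero_add, Nat.descFactorial_self, nsmul_eq_mul]
  have : Q.coeff n = 1 := by
    rw [← hd]
    exact hQ.coeff_natDegree
  rw [this, mul_one]

lemma poly_mem (n : ℕ) (hn : 1 ≤ n) {a b : ℝ} (hab : a < b) (Q : Polynomial ℝ)
    (hQ : Q.Monic) (hd : Q.natDegree = n) :
    IsDn n a b (fun k x => (Polynomial.derivative^[k] Q).eval x) ∧
      (n ! : ℝ) ≤ mIoo n a b (fun k x => (Polynomial.derivative^[k] Q).eval x) := by
  constructor
  · refine ⟨?_, ?_, ?_⟩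
    · intro k _ x _
      have h1 : HasDerivAt (fun y => (Polynomial.derivative^[k] Q).eval y)
          ((Polynomial.derivative^[k+1] Q).eval x) x := by
        rw [Function.iterate_succ_apply']
        exact (Polynomial.derivative^[k] Q).hasDerivAt x
      exact h1.hasDerivWithinAt
    · exact (Polynomial.continuous_aeval _).continuousOn
    · intro x _
      have h1 : HasDerivAt (fun y => (Polynomial.derivative^[n-1] Q).eval y)
          ((Polynomial.derivative^[(n-1)+1] Q).eval x) x := by
        rw [Function.iterate_succ_apply']
        exact (Polynomial.derivative^[n-1] Q).hasDerivAt x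
      have h2 : n - 1 + 1 = n := by omega
      rw [h2] at h1
      exact h1
  · unfold mIoo
    have himg : (fun t => |(Polynomial.derivative^[n] Q).eval t|) '' Set.Ioo a b
        = {(n ! : ℝ)} := by
      have hne : (Set.Ioo a b).Nonempty := Set.nonempty_Ioo.2 hab
      have : (fun t => |(Polynomial.derivative^[n] Q).eval t|) = fun _ => (n ! : ℝ) := by
        funext t
        rw [poly_fd_eval n hn Q hQ hd t]
        exact abs_of_nonneg (by positivity)
      rw [this]
      exact hne.image_const _
    rw [himg, csInf_singleton]

end Assembly

/-- The infimum of `‖f‖_p` over `f ∈ 𝒟ⁿ([a,b])` with `m_n(f) ≥ n!` equals `D**(n,p,[a,b])`,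
the infimum of `‖Q‖_p` over monic polynomials `Q` of degree `n`, for `0 < p ≤ ∞`. -/
theorem stmt3 (n : ℕ) (hn : 1 ≤ n) (a b : ℝ) (hab : a < b) (p : ℝ≥0∞) (hp : 0 < p) :
    sInf { c | ∃ fd : ℕ → ℝ → ℝ, IsDn n a b fd ∧ (n ! : ℝ) ≤ mIoo n a b fd ∧
        c = pnorm p a b (fd 0) } =
      sInf { c | ∃ Q : Polynomial ℝ, Q.Monic ∧ Q.natDegree = n ∧
        c = pnorm p a b (fun x => Q.eval x) } := by
  have hab' : a ≤ b := le_of_lt hab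
  set A := { c | ∃ fd : ℕ → ℝ → ℝ, IsDn n a b fd ∧ (n ! : ℝ) ≤ mIoo n a b fd ∧
      c = pnorm p a b (fd 0) } with hA
  set B := { c | ∃ Q : Polynomial ℝ, Q.Monic ∧ Q.natDegree = n ∧
      c = pnorm p a b (fun x => Q.eval x) } with hB
  have hBsubA : B ⊆ A := by
    rintro c ⟨Q, hQm, hQd, rfl⟩
    obtain ⟨hD, hmI⟩ := poly_mem n hn hab Q hQm hQd
    exact ⟨fun k x => (Polynomial.derivative^[k] Q).eval x, hD, hmI, rfl⟩
  have hAlb : ∀ c ∈ A, (0:ℝ) ≤ c := by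
    rintro c ⟨fd, _, _, rfl⟩
    exact pnorm_nonneg p hab' _
  have hBlb : ∀ c ∈ B, (0:ℝ) ≤ c := by
    rintro c ⟨Q, _, _, rfl⟩
    exact pnorm_nonneg p hab' _
  have hBne : B.Nonempty :=
    ⟨_, Polynomial.X ^ n, Polynomial.monic_X_pow n, Polynomial.natDegree_X_pow n, rfl⟩
  have hAne : A.Nonempty := hBne.mono hBsubA
  apply le_antisymm
  · exact csInf_le_csInf ⟨0, fun c hc => hAlb c hc⟩ hBne hBsubA
  · apply le_csInf hAne
    rintro c ⟨fd, hD, hmI, rfl⟩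
    have hmpt : ∀ t ∈ Set.Ioo a b, (n ! : ℝ) ≤ |fd n t| := by
      intro t ht
      refine le_trans hmI ?_
      unfold mIoo
      apply csInf_le
      · refine ⟨0, ?_⟩
        rintro v ⟨u, _, rfl⟩
        exact abs_nonneg _
      · exact ⟨t, ht, rfl⟩
    obtain ⟨ζs, hlen, hmem, hdom⟩ := domination hD hn hab hmpt
    obtain ⟨Q, hQm, hQd, hQe⟩ := exists_monic_poly ζs
    have hQd' : Q.natDegree = n := by rw [hQd, hlen]
    have hle : pnorm p a b (fun x => Q.eval x) ≤ pnorm p a b (fd 0) := by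
      apply pnorm_mono p hp hab' Q.continuous.continuousOn
        (hD.cont (by omega))
      intro x hx
      rw [hQe x]
      exact hdom x hx
    exact le_trans (csInf_le ⟨0, fun c hc => hBlb c hc⟩ ⟨Q, hQm, hQd', rfl⟩) hle
end
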